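/- arXiv:1105.3521 — 10 statements merged into one kernel-verified Lean document; each statement's English description precedes it below -/
import Mathlib

section
/- Let (X,Y) be a torsion pair in a triangulated category C. Then the subcategory I(X) of Ext-injective objects of X equals X ∩ Y[-1], and the subcategory P(Y) of Ext-projective objects of Y equals I(X)[1] = X[1] ∩ Y. -/
open CategoryTheory CategoryTheory.Limits CategoryTheory.Pretriangulated

variable {C : Type*} [Category C] [Preadditive C] [HasZeroObject C]
  [HasShift C ℤ] [∀ n : ℤ, (shiftFunctor C n).Additive] [Pretriangulated C]

/-- `Hom(𝒳, 𝒴) = 0`. -/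
def homZero (𝒳 𝒴 : Set C) : Prop :=
  ∀ ⦃A B : C⦄, A ∈ 𝒳 → B ∈ 𝒴 → ∀ f : A ⟶ B, f = 0

/-- The shift `𝒳[n]` of a subcategory (closed under isomorphisms). -/
def shiftSet (𝒳 : Set C) (n : ℤ) : Set C :=
  {Z | ∃ A ∈ 𝒳, Nonempty ((A⟦n⟧) ≅ Z)}

/-- The class `𝒳 * 𝒴` of extensions. -/
def extClass (𝒳 𝒴 : Set C) : Set C :=
  {Z | ∃ (A B : C) (f : A ⟶ Z) (g : Z ⟶ B) (h : B ⟶ A⟦(1:ℤ)⟧),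
      A ∈ 𝒳 ∧ B ∈ 𝒴 ∧ Triangle.mk f g h ∈ distTriang C}

/-- A torsion pair: `Hom(𝒳,𝒴) = 0` and `C = 𝒳 * 𝒴`. -/
def IsTorsionPair (𝒳 𝒴 : Set C) : Prop :=
  homZero 𝒳 𝒴 ∧ ∀ Z : C, Z ∈ extClass 𝒳 𝒴

/-- A cotorsion pair: `Hom(𝒳,𝒲[1]) = 0` and `C = 𝒳 * 𝒲[1]`. -/
def IsCotorsionPair (𝒳 𝒲 : Set C) : Prop :=
  IsTorsionPair 𝒳 (shiftSet 𝒲 (1:ℤ))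

/-- Full subcategory closed under isomorphisms, finite direct sums and direct summands. -/
structure IsSubcat (𝒳 : Set C) : Prop where
  mem_of_iso : ∀ ⦃A B : C⦄, (A ≅ B) → A ∈ 𝒳 → B ∈ 𝒳
  biprod_mem : ∀ ⦃A B : C⦄, A ∈ 𝒳 → B ∈ 𝒳 → (A ⊞ B) ∈ 𝒳
  mem_of_biprod : ∀ ⦃A B : C⦄, (A ⊞ B) ∈ 𝒳 → A ∈ 𝒳 ∧ B ∈ 𝒳

/-- `⊥(𝒟[1]) = {M : Hom(M, 𝒟[1]) = 0}`. -/
def leftPerpShift (𝒟 : Set C) : Set C :=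
  {M : C | ∀ D ∈ 𝒟, ∀ f : M ⟶ (D⟦(1:ℤ)⟧), f = 0}

/-- `(𝒟[-1])⊥ = {M : Hom(𝒟[-1], M) = 0}`. -/
def shiftRightPerp (𝒟 : Set C) : Set C :=
  {M : C | ∀ D ∈ 𝒟, ∀ f : (D⟦(-1:ℤ)⟧) ⟶ M, f = 0}

/-- `A` admits a left `𝒟`-approximation. -/
def HasLeftApprox (𝒟 : Set C) (A : C) : Prop :=
  ∃ D ∈ 𝒟, ∃ f : A ⟶ D, ∀ D' ∈ 𝒟, ∀ g : A ⟶ D', ∃ h : D ⟶ D', f ≫ h = g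

/-- `A` admits a right `𝒟`-approximation. -/
def HasRightApprox (𝒟 : Set C) (A : C) : Prop :=
  ∃ D ∈ 𝒟, ∃ f : D ⟶ A, ∀ D' ∈ 𝒟, ∀ g : D' ⟶ A, ∃ h : D' ⟶ D, h ≫ f = g

/-- `μ⁻¹(ℳ;𝒟) = (𝒟 * ℳ[1]) ∩ ⊥(𝒟[1])`. -/
def muInv (ℳ 𝒟 : Set C) : Set C :=
  extClass 𝒟 (shiftSet ℳ (1:ℤ)) ∩ leftPerpShift 𝒟

/-- `μ(𝒩;𝒟) = (𝒩[-1] * 𝒟) ∩ (𝒟[-1])⊥`. -/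
def mu (𝒩 𝒟 : Set C) : Set C :=
  extClass (shiftSet 𝒩 (-1:ℤ)) 𝒟 ∩ shiftRightPerp 𝒟

/-- `(ℳ,𝒩)` is a `𝒟`-mutation pair. -/
def IsMutationPair (ℳ 𝒩 𝒟 : Set C) : Prop :=
  ℳ = mu 𝒩 𝒟 ∧ 𝒩 = muInv ℳ 𝒟

/-- Condition (RF): `𝒟` is functorially finite, rigid and `⊥(𝒟[1]) = (𝒟[-1])⊥`. -/
def RF (𝒟 : Set C) : Prop :=
  (∀ A : C, HasLeftApprox 𝒟 A) ∧ (∀ A : C, HasRightApprox 𝒟 A) ∧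
    homZero 𝒟 (shiftSet 𝒟 (1:ℤ)) ∧ leftPerpShift 𝒟 = shiftRightPerp 𝒟

/-- The Ext-injective objects of `𝒳`. -/
def extInj (𝒳 : Set C) : Set C :=
  {T : C | T ∈ 𝒳 ∧ ∀ A ∈ 𝒳, ∀ f : A ⟶ (T⟦(1:ℤ)⟧), f = 0}

/-- The Ext-projective objects of `𝒴`. -/
def extProj (𝒴 : Set C) : Set C :=
  {T : C | T ∈ 𝒴 ∧ ∀ B ∈ 𝒴, ∀ f : T ⟶ (B⟦(1:ℤ)⟧), f = 0}

/-- for a torsion pair `(𝒳,𝒴)`, `I(𝒳) = 𝒳 ∩ 𝒴[-1]` and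
`P(𝒴) = I(𝒳)[1] = 𝒳[1] ∩ 𝒴`. -/
theorem stmt0 (𝒳 𝒴 : Set C) (hX : IsSubcat 𝒳) (hY : IsSubcat 𝒴)
    (h : IsTorsionPair 𝒳 𝒴) :
    extInj 𝒳 = 𝒳 ∩ shiftSet 𝒴 (-1:ℤ) ∧
    extProj 𝒴 = shiftSet (extInj 𝒳) (1:ℤ) ∧
    shiftSet (extInj 𝒳) (1:ℤ) = shiftSet 𝒳 (1:ℤ) ∩ 𝒴 := by
  obtain ⟨hhom, hdec⟩ := h
  have h1 : extInj 𝒳 = 𝒳 ∩ shiftSet 𝒴 (-1:ℤ) := by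
    ext T
    constructor
    · rintro ⟨hT, hInj⟩
      refine ⟨hT, ?_⟩
      obtain ⟨A, B, f, g, k, hA, hB, hTr⟩ := hdec (T⟦(1:ℤ)⟧)
      have hf : f = 0 := hInj A hA f
      have hrot := rot_of_distTriang _ hTr
      have hz : (Triangle.mk f g k).rotate.mor₃ = 0 := by
        show -(f⟦(1:ℤ)⟧') = 0
        rw [hf, Functor.map_zero, neg_zero]
      obtain ⟨e, -, -⟩ := exists_iso_binaryBiproduct_of_distTriang _ hrot hz
      have hmem : ((T⟦(1:ℤ)⟧) ⊞ (A⟦(1:ℤ)⟧)) ∈ 𝒴 := hY.mem_of_iso e hB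
      exact ⟨T⟦(1:ℤ)⟧, (hY.mem_of_biprod hmem).1, ⟨shiftShiftNeg T 1⟩⟩
    · rintro ⟨hT, Y, hYmem, ⟨e⟩⟩
      refine ⟨hT, fun A hA f => ?_⟩
      have h0 : f ≫ ((shiftFunctor C (1:ℤ)).mapIso e.symm ≪≫ shiftNegShift Y 1).hom = 0 :=
        hhom hA hYmem _
      rw [← cancel_mono ((shiftFunctor C (1:ℤ)).mapIso e.symm ≪≫ shiftNegShift Y 1).hom,
        h0, zero_comp]
  have h3 : shiftSet (extInj 𝒳) (1:ℤ) = shiftSet 𝒳 (1:ℤ) ∩ 𝒴 := by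
    ext Z
    constructor
    · rintro ⟨T, hTmem, ⟨e⟩⟩
      have hT' := hTmem
      rw [h1] at hT'
      obtain ⟨hT𝒳, Y, hYmem, ⟨e'⟩⟩ := hT'
      refine ⟨⟨T, hT𝒳, ⟨e⟩⟩, ?_⟩
      exact hY.mem_of_iso ((shiftNegShift Y 1).symm ≪≫
        (shiftFunctor C (1:ℤ)).mapIso e' ≪≫ e) hYmem
    · rintro ⟨⟨X, hX𝒳, ⟨e⟩⟩, hZ𝒴⟩
      refine ⟨X, ⟨hX𝒳, fun A hA f => ?_⟩, ⟨e⟩⟩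
      have h0 : f ≫ e.hom = 0 := hhom hA hZ𝒴 _
      rw [← cancel_mono e.hom, h0, zero_comp]
  have h2 : extProj 𝒴 = shiftSet 𝒳 (1:ℤ) ∩ 𝒴 := by
    ext T
    constructor
    · rintro ⟨hT, hProj⟩
      obtain ⟨A, B, f, g, k, hA, hB, hTr⟩ := hdec (T⟦(-1:ℤ)⟧)
      have hg1 : (shiftNegShift T 1).inv ≫ (g⟦(1:ℤ)⟧') = 0 := hProj B hB _
      have hg2 : (g⟦(1:ℤ)⟧') = 0 := by
        rw [← cancel_epi (shiftNegShift T 1).inv, hg1, comp_zero]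
      have hg : g = 0 := (shiftFunctor C (1:ℤ)).map_injective
        (by rw [hg2, Functor.map_zero])
      have hinv := inv_rot_of_distTriang _ hTr
      have hz : (Triangle.mk f g k).invRotate.mor₃ = 0 := by
        show g ≫ _ = 0
        subst hg
        exact zero_comp
      obtain ⟨e, -, -⟩ := exists_iso_binaryBiproduct_of_distTriang _ hinv hz
      have hmem : ((B⟦(-1:ℤ)⟧) ⊞ (T⟦(-1:ℤ)⟧)) ∈ 𝒳 := hX.mem_of_iso e hA
      exact ⟨⟨T⟦(-1:ℤ)⟧, (hX.mem_of_biprod hmem).2, ⟨shiftNegShift T 1⟩⟩, hT⟩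
    · rintro ⟨⟨X, hX𝒳, ⟨e⟩⟩, hT𝒴⟩
      refine ⟨hT𝒴, fun B hB f => ?_⟩
      have h0 : (shiftFunctor C (1:ℤ)).preimage (e.hom ≫ f) = 0 :=
        hhom hX𝒳 hB _
      have h1' : e.hom ≫ f = 0 := by
        rw [← (shiftFunctor C (1:ℤ)).map_preimage (e.hom ≫ f), h0, Functor.map_zero]
      rw [← cancel_epi e.hom, h1', comp_zero]
  exact ⟨h1, by rw [h2, h3], h3⟩
end

section
/- Let (X,Y) be a torsion pair in a triangulated category C. Then I(X) is covariantly finite in X, i.e. every object of X admits a left I(X)-approximation, and P(Y) is contravariantly finite in Y, i.e. every object of Y admits a right P(Y)-approximation. -/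
open CategoryTheory CategoryTheory.Limits CategoryTheory.Pretriangulated

variable {C : Type*} [Category C] [Preadditive C] [HasZeroObject C]
  [HasShift C ℤ] [∀ n : ℤ, (shiftFunctor C n).Additive] [Pretriangulated C]

section Aux

variable (𝒳 𝒴 : Set C)

lemma mem_X_of_perp (hX : IsSubcat 𝒳) (h : IsTorsionPair 𝒳 𝒴) {M : C}
    (hM : ∀ Y' ∈ 𝒴, ∀ u : M ⟶ Y', u = 0) : M ∈ 𝒳 := by
  obtain ⟨XA, YA, a, b, hh, hXA, hYA, hdt⟩ := h.2 M
  have hb : b = 0 := hM YA hYA b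
  have hdt' := inv_rot_of_distTriang _ hdt
  have hz : (Triangle.mk a b hh).invRotate.mor₃ = 0 := by
    simp [Triangle.invRotate, hb]
    exact zero_comp
  obtain ⟨e, -, -⟩ := exists_iso_binaryBiproduct_of_distTriang _ hdt' hz
  exact (hX.mem_of_biprod (hX.mem_of_iso e hXA)).2

lemma mem_Y_of_perp (hY : IsSubcat 𝒴) (h : IsTorsionPair 𝒳 𝒴) {M : C}
    (hM : ∀ X' ∈ 𝒳, ∀ u : X' ⟶ M, u = 0) : M ∈ 𝒴 := by
  obtain ⟨XA, YA, a, b, hh, hXA, hYA, hdt⟩ := h.2 M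
  have ha : a = 0 := hM XA hXA a
  have hdt' := rot_of_distTriang _ hdt
  have hz : (Triangle.mk a b hh).rotate.mor₃ = 0 := by
    simp [Triangle.rotate, ha]
    exact neg_eq_zero.mpr (Functor.map_zero _ _ _)
  obtain ⟨e, -, -⟩ := exists_iso_binaryBiproduct_of_distTriang _ hdt' hz
  exact (hY.mem_of_biprod (hY.mem_of_iso e hYA)).1

lemma zero_of_shiftneg_to_inj {X' T' : C} (hX' : X' ∈ 𝒳) (hT' : T' ∈ extInj 𝒳)
    (w : (X'⟦(-1:ℤ)⟧) ⟶ T') : w = 0 := by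
  have e := (shiftEquiv C (1:ℤ)).counitIso.app X'
  have hv : (e.inv ≫ (shiftFunctor C (1:ℤ)).map w : X' ⟶ (T'⟦(1:ℤ)⟧)) = 0 :=
    hT'.2 X' hX' _
  have hmap : (shiftFunctor C (1:ℤ)).map w = 0 := by
    have : (shiftFunctor C (1:ℤ)).map w = e.hom ≫ (e.inv ≫ (shiftFunctor C (1:ℤ)).map w) := by
      exact (Iso.hom_inv_id_assoc e _).symm
    rw [this, hv]
    exact comp_zero
  apply (shiftFunctor C (1:ℤ)).map_injective
  rw [hmap, Functor.map_zero]

end Aux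

/-- for a torsion pair `(𝒳,𝒴)`, `I(𝒳)` is covariantly finite in `𝒳` and
`P(𝒴)` is contravariantly finite in `𝒴`. -/
theorem stmt1 (𝒳 𝒴 : Set C) (hX : IsSubcat 𝒳) (hY : IsSubcat 𝒴)
    (h : IsTorsionPair 𝒳 𝒴) :
    (∀ A ∈ 𝒳, ∃ T ∈ extInj 𝒳, ∃ f : A ⟶ T,
      ∀ T' ∈ extInj 𝒳, ∀ g : A ⟶ T', ∃ u : T ⟶ T', f ≫ u = g) ∧
    (∀ B ∈ 𝒴, ∃ T ∈ extProj 𝒴, ∃ f : T ⟶ B,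
      ∀ T' ∈ extProj 𝒴, ∀ g : T' ⟶ B, ∃ u : T' ⟶ T, u ≫ f = g) := by
  constructor
  · intro A hA
    obtain ⟨XA, YA, a, b, hh, hXA, hYA, hdt⟩ := h.2 (A⟦(1:ℤ)⟧)
    have hdt2 := inv_rot_of_distTriang _ (inv_rot_of_distTriang _ hdt)
    set T2 := (Triangle.mk a b hh).invRotate.invRotate with hT2def
    let e : A ≅ ((A⟦(1:ℤ)⟧)⟦(-1:ℤ)⟧) := (shiftEquiv C (1:ℤ)).unitIso.app A
    refine ⟨YA⟦(-1:ℤ)⟧, ⟨?_, ?_⟩, e.hom ≫ T2.mor₁, ?_⟩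
    · apply mem_X_of_perp 𝒳 𝒴 hX h
      intro Y' hY' u
      have hf : T2.mor₁ ≫ u = 0 := h.1 (hX.mem_of_iso e hA) hY' _
      obtain ⟨g, hg⟩ := Triangle.yoneda_exact₂ T2 hdt2 u hf
      have hg0 : g = 0 := h.1 hXA hY' g
      rw [hg, hg0]
      exact comp_zero
    · intro A'' hA'' u
      let e2 : ((YA⟦(-1:ℤ)⟧)⟦(1:ℤ)⟧) ≅ YA := (shiftEquiv C (1:ℤ)).counitIso.app YA
      have hu : u ≫ e2.hom = 0 := h.1 hA'' hYA _
      have : u = (u ≫ e2.hom) ≫ e2.inv := by simp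
      rw [this, hu, zero_comp]
    · intro T' hT' g
      have obst : T2.invRotate.mor₁ ≫ (e.inv ≫ g) = 0 :=
        zero_of_shiftneg_to_inj 𝒳 hXA hT' _
      obtain ⟨uu, huu⟩ := Triangle.yoneda_exact₂ _ (inv_rot_of_distTriang _ hdt2)
        (e.inv ≫ g) obst
      have huu' : e.inv ≫ g = T2.mor₁ ≫ uu := huu
      refine ⟨uu, ?_⟩
      erw [Category.assoc, ← huu', Iso.hom_inv_id_assoc]
  · intro B hB
    obtain ⟨XB, YB, a, b, hh, hXB, hYB, hdt⟩ := h.2 (B⟦(-1:ℤ)⟧)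
    have hdt2 := rot_of_distTriang _ (rot_of_distTriang _ hdt)
    set T2 := (Triangle.mk a b hh).rotate.rotate with hT2def
    let e : ((B⟦(-1:ℤ)⟧)⟦(1:ℤ)⟧) ≅ B := (shiftEquiv C (1:ℤ)).counitIso.app B
    refine ⟨XB⟦(1:ℤ)⟧, ⟨?_, ?_⟩, T2.mor₂ ≫ e.hom, ?_⟩
    · apply mem_Y_of_perp 𝒳 𝒴 hY h
      intro X' hX' u
      have hu2 : u ≫ T2.mor₂ = 0 := h.1 hX' (hY.mem_of_iso e.symm hB) _
      obtain ⟨g, hg⟩ := Triangle.coyoneda_exact₂ T2 hdt2 u hu2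
      have hg0 : g = 0 := h.1 hX' hYB g
      rw [hg, hg0]
      exact zero_comp
    · intro B'' hB'' u
      have : u = (shiftFunctor C (1:ℤ)).map ((shiftFunctor C (1:ℤ)).preimage u) :=
        ((shiftFunctor C (1:ℤ)).map_preimage u).symm
      have hw : (shiftFunctor C (1:ℤ)).preimage u = 0 := h.1 hXB hB'' _
      rw [this, hw, Functor.map_zero]
    · intro T' hT' g
      have obst : (g ≫ e.inv) ≫ T2.mor₃ = 0 := hT'.2 YB hYB _
      obtain ⟨uu, huu⟩ := Triangle.coyoneda_exact₃ T2 hdt2 (g ≫ e.inv) obst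
      refine ⟨uu, ?_⟩
      erw [← Category.assoc, ← huu, Category.assoc, Iso.inv_hom_id, Category.comp_id]
end

section
/- Let (X,Y) be a torsion pair in a triangulated category C with core I = X ∩ Y[-1]. Then (X,Y) is a t-structure (i.e. X[1] ⊆ X, equivalently Y[-1] ⊆ Y) if and only if I consists only of zero objects. -/
open CategoryTheory CategoryTheory.Limits CategoryTheory.Pretriangulated

variable {C : Type*} [Category C] [Preadditive C] [HasZeroObject C]
  [HasShift C ℤ] [∀ n : ℤ, (shiftFunctor C n).Additive] [Pretriangulated C]

lemma myMemOfHomZeroRight {𝒳 𝒴 : Set C} (hX : IsSubcat 𝒳) (h : IsTorsionPair 𝒳 𝒴)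
    {Z : C} (hZ : ∀ B ∈ 𝒴, ∀ f : Z ⟶ B, f = 0) : Z ∈ 𝒳 := by
  obtain ⟨A, B, f, g, w, hA, hB, hT⟩ := h.2 Z
  have hg : g = 0 := hZ B hB g
  have hT' := inv_rot_of_distTriang _ hT
  have hz : (Triangle.mk f g w).invRotate.mor₃ = 0 := by
    simp [Triangle.invRotate, hg]
    exact zero_comp
  obtain ⟨e, -, -⟩ := exists_iso_binaryBiproduct_of_distTriang _ hT' hz
  exact (hX.mem_of_biprod (hX.mem_of_iso e hA)).2

lemma myMemOfHomZeroLeft {𝒳 𝒴 : Set C} (hY : IsSubcat 𝒴) (h : IsTorsionPair 𝒳 𝒴)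
    {Z : C} (hZ : ∀ A ∈ 𝒳, ∀ f : A ⟶ Z, f = 0) : Z ∈ 𝒴 := by
  obtain ⟨A, B, f, g, w, hA, hB, hT⟩ := h.2 Z
  have hf : f = 0 := hZ A hA f
  have hT' := rot_of_distTriang _ hT
  have hz : (Triangle.mk f g w).rotate.mor₃ = 0 := by
    simp [Triangle.rotate, hf]
    exact (congrArg Neg.neg (Functor.map_zero _ _ _)).trans neg_zero
  obtain ⟨e, -, -⟩ := exists_iso_binaryBiproduct_of_distTriang _ hT' hz
  exact (hY.mem_of_biprod (hY.mem_of_iso e hB)).1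

lemma myHomZeroShiftNeg {𝒳 𝒴 : Set C} (hX : IsSubcat 𝒳) (hY : IsSubcat 𝒴)
    (h : IsTorsionPair 𝒳 𝒴)
    (hc : ∀ Z ∈ 𝒳 ∩ shiftSet 𝒴 (-1:ℤ), IsZero Z)
    {A B : C} (hA : A ∈ 𝒳) (hB : B ∈ 𝒴) (g : A ⟶ (B⟦(-1:ℤ)⟧)) : g = 0 := by
  obtain ⟨X', B', f', g', w', hX', hB', hT'⟩ := h.2 (B⟦(-1:ℤ)⟧)
  have hX1Y : (X'⟦(1:ℤ)⟧) ∈ 𝒴 := by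
    apply myMemOfHomZeroLeft hY h
    intro A' hA' f
    have hzero : f ≫ f'⟦(1:ℤ)⟧' = 0 := by
      have h0 := h.1 hA' hB (f ≫ f'⟦(1:ℤ)⟧' ≫ ((shiftEquiv C (1:ℤ)).counitIso.hom.app B))
      refine (cancel_mono ((shiftEquiv C (1:ℤ)).counitIso.hom.app B)).1 ?_
      exact (Category.assoc _ _ _).trans (h0.trans zero_comp.symm)
    obtain ⟨q, hq⟩ := Triangle.coyoneda_exact₁ _ hT' f hzero
    rw [hq, h.1 hA' hB' q]
    exact zero_comp
  have hXc : IsZero X' :=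
    hc X' ⟨hX', ⟨X'⟦(1:ℤ)⟧, hX1Y, ⟨((shiftEquiv C (1:ℤ)).unitIso.app X').symm⟩⟩⟩
  have hgg' : g ≫ g' = 0 := h.1 hA hB' (g ≫ g')
  obtain ⟨a, ha⟩ := Triangle.coyoneda_exact₂ _ hT' g hgg'
  rw [ha, hXc.eq_of_tgt a 0]
  exact zero_comp

/-- a torsion pair `(𝒳,𝒴)` is a t-structure iff its core `𝒳 ∩ 𝒴[-1]`
consists only of zero objects. -/
theorem stmt2 (𝒳 𝒴 : Set C) (hX : IsSubcat 𝒳) (hY : IsSubcat 𝒴)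
    (h : IsTorsionPair 𝒳 𝒴) :
    shiftSet 𝒳 (1:ℤ) ⊆ 𝒳 ↔ ∀ Z ∈ 𝒳 ∩ shiftSet 𝒴 (-1:ℤ), IsZero Z := by
  constructor
  · intro hS Z hZ
    obtain ⟨hZX, B, hB, ⟨e⟩⟩ := hZ
    have hZ1X : (Z⟦(1:ℤ)⟧) ∈ 𝒳 := hS ⟨Z, hZX, ⟨Iso.refl _⟩⟩
    have hiso : (Z⟦(1:ℤ)⟧) ≅ B :=
      (shiftFunctor C (1:ℤ)).mapIso e.symm ≪≫ (shiftEquiv C (1:ℤ)).counitIso.app B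
    have h0 : hiso.hom = 0 := h.1 hZ1X hB hiso.hom
    have hz1 : IsZero (Z⟦(1:ℤ)⟧) := by
      rw [IsZero.iff_id_eq_zero, ← hiso.hom_inv_id, h0, zero_comp]
    have hz2 : IsZero ((Z⟦(1:ℤ)⟧)⟦(-1:ℤ)⟧) := by
      have hid : 𝟙 (Z⟦(1:ℤ)⟧) = 0 := (IsZero.iff_id_eq_zero _).mp hz1
      rw [IsZero.iff_id_eq_zero, ← (shiftFunctor C (-1:ℤ)).map_id, hid, Functor.map_zero]
    exact IsZero.of_iso hz2 ((shiftEquiv C (1:ℤ)).unitIso.app Z)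
  · intro hc Z hZmem
    obtain ⟨A, hA, ⟨e⟩⟩ := hZmem
    apply myMemOfHomZeroRight hX h
    intro B hB f
    have key : (shiftEquiv C (1:ℤ)).unitIso.hom.app A ≫ (e.hom ≫ f)⟦(-1:ℤ)⟧' = 0 :=
      myHomZeroShiftNeg hX hY h hc hA hB _
    have h1 : (e.hom ≫ f)⟦(-1:ℤ)⟧' = 0 := by
      refine (cancel_epi ((shiftEquiv C (1:ℤ)).unitIso.hom.app A)).1 ?_
      exact key.trans comp_zero.symm
    have h2 : e.hom ≫ f = 0 := (shiftFunctor C (-1:ℤ)).map_injective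
      (by rw [h1, Functor.map_zero])
    rw [← e.inv_hom_id_assoc f, h2, comp_zero]
end

section
/- Let (X,Y) be a torsion pair in a triangulated category C. Then (X,Y) is a cluster tilting torsion pair (i.e. for every object M of C, M lies in X if and only if Hom(X,M[1])=0 for all X in X) if and only if Y = X[1]. -/
open CategoryTheory CategoryTheory.Limits CategoryTheory.Pretriangulated

variable {C : Type*} [Category C] [Preadditive C] [HasZeroObject C]
  [HasShift C ℤ] [∀ n : ℤ, (shiftFunctor C n).Additive] [Pretriangulated C]

private lemma split_of_mor₁_zero {A Z B : C} {f : A ⟶ Z} {g : Z ⟶ B} {h : B ⟶ A⟦(1:ℤ)⟧}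
    (hT : Triangle.mk f g h ∈ distTriang C) (hf : f = 0) :
    Nonempty (B ≅ Z ⊞ A⟦(1:ℤ)⟧) := by
  obtain ⟨e, -, -⟩ := Pretriangulated.exists_iso_binaryBiproduct_of_distTriang _
    (rot_of_distTriang _ hT) (by dsimp [Triangle.rotate]; rw [hf]; exact (by simp : -(shiftFunctor C (1:ℤ)).map (0 : A ⟶ Z) = 0))
  exact ⟨e⟩

/-- a torsion pair `(𝒳,𝒴)` is cluster tilting iff `𝒴 = 𝒳[1]`. -/
theorem stmt3 (𝒳 𝒴 : Set C) (hX : IsSubcat 𝒳) (hY : IsSubcat 𝒴)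
    (h : IsTorsionPair 𝒳 𝒴) :
    (∀ M : C, M ∈ 𝒳 ↔ ∀ A ∈ 𝒳, ∀ f : A ⟶ (M⟦(1:ℤ)⟧), f = 0) ↔
      𝒴 = shiftSet 𝒳 (1:ℤ) := by
  obtain ⟨hhom, hdec⟩ := h
  constructor
  · intro hct
    apply Set.eq_of_subset_of_subset
    · intro Y hYmem
      refine ⟨Y⟦(-1:ℤ)⟧, (hct _).mpr ?_, ⟨(shiftEquiv C (1:ℤ)).counitIso.app Y⟩⟩
      intro A hA f
      set e := (shiftEquiv C (1:ℤ)).counitIso.app Y with he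
      have hz : f ≫ e.hom = 0 := hhom hA hYmem _
      calc f = ((f ≫ e.hom) ≫ e.inv : A ⟶ (shiftFunctor C (1:ℤ)).obj ((shiftFunctor C (-1:ℤ)).obj Y)) := by
            erw [Category.assoc, e.hom_inv_id, Category.comp_id]
        _ = 0 := by rw [hz]; exact Limits.zero_comp
    · rintro Z ⟨X₀, hX₀, ⟨e⟩⟩
      refine hY.mem_of_iso e ?_
      obtain ⟨A, B, f, g, hc, hA, hB, hTd⟩ := hdec (X₀⟦(1:ℤ)⟧)
      obtain ⟨e'⟩ := split_of_mor₁_zero hTd ((hct X₀).mp hX₀ A hA f)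
      exact (hY.mem_of_biprod (hY.mem_of_iso e' hB)).1
  · intro hYX M
    constructor
    · intro hM A hA f
      exact hhom hA (show M⟦(1:ℤ)⟧ ∈ 𝒴 from hYX ▸ ⟨M, hM, ⟨Iso.refl _⟩⟩) f
    · intro hM
      obtain ⟨A, B, f, g, hc, hA, hB, hTd⟩ := hdec (M⟦(1:ℤ)⟧)
      obtain ⟨e'⟩ := split_of_mor₁_zero hTd (hM A hA f)
      rw [hYX] at hB
      obtain ⟨X₀, hX₀, ⟨eB⟩⟩ := hB
      letI := preservesBinaryBiproduct_of_preservesBiproduct (shiftFunctor C (1:ℤ)) M A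
      have e₂ : X₀⟦(1:ℤ)⟧ ≅ (M ⊞ A)⟦(1:ℤ)⟧ :=
        eB ≪≫ e' ≪≫ ((shiftFunctor C (1:ℤ)).mapBiprod M A).symm
      have e₃ : X₀ ≅ M ⊞ A :=
        (shiftEquiv C (1:ℤ)).unitIso.app X₀ ≪≫ (shiftFunctor C (-1:ℤ)).mapIso e₂ ≪≫
          ((shiftEquiv C (1:ℤ)).unitIso.app (M ⊞ A)).symm
      exact (hX.mem_of_biprod (hX.mem_of_iso e₃ hX₀)).1
end

section
/- Let (X,Y) be a torsion pair in a triangulated category C such that X[1] ⊆ Y and every object M of C with Hom(M,M[1])=0 belongs to X*X[1]. Then (X,Y) is a maximal rigid torsion pair: X is rigid (Hom(X,X[1])=0), and any object M satisfying Hom(M⊕X₁,(M⊕X₂)[1])=0 for all X₁,X₂ in X belongs to X. -/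
open CategoryTheory CategoryTheory.Limits CategoryTheory.Pretriangulated

variable {C : Type*} [Category C] [Preadditive C] [HasZeroObject C]
  [HasShift C ℤ] [∀ n : ℤ, (shiftFunctor C n).Additive] [Pretriangulated C]

/-- if `(𝒳,𝒴)` is a torsion pair with `𝒳[1] ⊆ 𝒴` and every rigid object
belongs to `𝒳 * 𝒳[1]`, then `(𝒳,𝒴)` is a maximal rigid torsion pair. -/
theorem stmt4 (𝒳 𝒴 : Set C) (hX : IsSubcat 𝒳) (hY : IsSubcat 𝒴)
    (h : IsTorsionPair 𝒳 𝒴)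
    (hshift : shiftSet 𝒳 (1:ℤ) ⊆ 𝒴)
    (hrigid : ∀ M : C, (∀ f : M ⟶ (M⟦(1:ℤ)⟧), f = 0) →
      M ∈ extClass 𝒳 (shiftSet 𝒳 (1:ℤ))) :
    homZero 𝒳 (shiftSet 𝒳 (1:ℤ)) ∧
    ∀ M : C, (∀ X₁ ∈ 𝒳, ∀ X₂ ∈ 𝒳, ∀ f : (M ⊞ X₁) ⟶ ((M ⊞ X₂)⟦(1:ℤ)⟧), f = 0) →
      M ∈ 𝒳 := by
  constructor
  · rintro A B hA hB f
    exact h.1 hA (hshift hB) f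
  · intro M hM
    -- produce some object of 𝒳
    obtain ⟨A₀, B₀, _, _, _, hA₀, -, -⟩ := h.2 M
    -- M is rigid
    have hMM : ∀ f : M ⟶ (M⟦(1:ℤ)⟧), f = 0 := by
      intro f
      have h0 := hM A₀ hA₀ A₀ hA₀
        ((biprod.fst : M ⊞ A₀ ⟶ M) ≫ f ≫ ((biprod.inl : M ⟶ M ⊞ A₀)⟦(1:ℤ)⟧'))
      have key : (biprod.inl : M ⟶ M ⊞ A₀) ≫
          ((biprod.fst : M ⊞ A₀ ⟶ M) ≫ f ≫ ((biprod.inl : M ⟶ M ⊞ A₀)⟦(1:ℤ)⟧'))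
          ≫ ((biprod.fst : M ⊞ A₀ ⟶ M)⟦(1:ℤ)⟧') = f := by
        simp [← Functor.map_comp]
      rw [← key, h0]
      simp
    -- Hom(M, X⟦1⟧) = 0 for X ∈ 𝒳
    have hMX : ∀ X ∈ 𝒳, ∀ q : M ⟶ (X⟦(1:ℤ)⟧), q = 0 := by
      intro X hXmem q
      have h0 := hM X hXmem X hXmem
        ((biprod.fst : M ⊞ X ⟶ M) ≫ q ≫ ((biprod.inr : X ⟶ M ⊞ X)⟦(1:ℤ)⟧'))
      have key : (biprod.inl : M ⟶ M ⊞ X) ≫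
          ((biprod.fst : M ⊞ X ⟶ M) ≫ q ≫ ((biprod.inr : X ⟶ M ⊞ X)⟦(1:ℤ)⟧'))
          ≫ ((biprod.snd : M ⊞ X ⟶ X)⟦(1:ℤ)⟧') = q := by
        simp [← Functor.map_comp]
      rw [← key, h0]
      simp
    obtain ⟨X₀, B, f, g, hcon, hX₀, hB, hdt⟩ := hrigid M hMM
    obtain ⟨X₁, hX₁, ⟨e⟩⟩ := hB
    have hg0 : g = 0 := by
      have : g = (g ≫ e.inv) ≫ e.hom := by simp
      rw [this, hMX X₁ hX₁ (g ≫ e.inv), zero_comp]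
    obtain ⟨s, hs⟩ := Triangle.coyoneda_exact₂ (Triangle.mk f g hcon) hdt (𝟙 M)
      (by simp [hg0]; exact comp_zero)
    -- hs : 𝟙 M = s ≫ f, with s : M ⟶ X₀
    have hdt' := inv_rot_of_distTriang _ hdt
    have hmor30 : (Triangle.mk f g hcon).invRotate.mor₃ = 0 := by
      dsimp [Triangle.invRotate]
      simp [hg0]; exact zero_comp
    let φ : binaryBiproductTriangle (B⟦(-1:ℤ)⟧) M ⟶ (Triangle.mk f g hcon).invRotate :=
      Triangle.homMk _ _ (𝟙 _)
        (biprod.desc (Triangle.mk f g hcon).invRotate.mor₁ s) (𝟙 _)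
        (by erw [biprod.inl_desc, Category.id_comp])
        (by
          apply biprod.hom_ext'
          · erw [biprod.inl_snd_assoc, Category.comp_id, biprod.inl_desc_assoc]
            exact (comp_distTriang_mor_zero₁₂ _ hdt').symm
          · erw [biprod.inr_snd_assoc, biprod.inr_desc_assoc]
            exact hs)
        (by erw [zero_comp, hmor30, comp_zero])
    have : IsIso φ.hom₂ :=
      isIso₂_of_isIso₁₃ φ (binaryBiproductTriangle_distinguished _ _) hdt'
        (by dsimp [φ]; exact (inferInstance : IsIso (𝟙 (B⟦(-1:ℤ)⟧)))) (by dsimp [φ]; exact (inferInstance : IsIso (𝟙 M)))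
    have hiso : ((B⟦(-1:ℤ)⟧) ⊞ M) ≅ X₀ := @asIso _ _ _ _ φ.hom₂ this
    exact (hX.mem_of_biprod (hX.mem_of_iso hiso.symm hX₀)).2
end

section
/- Let C be a triangulated category and D a rigid subcategory (Hom(D,D[1])=0). Let Ď denote the subcategory of objects of C admitting a left D-approximation and D̂ the subcategory of objects admitting a right D-approximation. Then M ↦ μ⁻¹(M;D) gives a one-to-one correspondence between the set of subcategories M of C satisfying D ⊆ M ⊆ Ď ∩ (D[-1])⊥ and the set of subcategories N of C satisfying D ⊆ N ⊆ D̂ ∩ ⊥(D[1]), whose inverse is N ↦ μ(N;D). -/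
open CategoryTheory CategoryTheory.Limits CategoryTheory.Pretriangulated

variable {C : Type*} [Category C] [Preadditive C] [HasZeroObject C]
  [HasShift C ℤ] [∀ n : ℤ, (shiftFunctor C n).Additive] [Pretriangulated C]

section IYHelpers

set_option linter.unusedSectionVars false

open CategoryTheory.Preadditive ZeroObject

lemma IY_shift_up {X Y : C} (h : ∀ f : X ⟶ Y⟦(1:ℤ)⟧, f = 0) (g : X⟦(-1:ℤ)⟧ ⟶ Y) : g = 0 := by
  have h0 : (shiftNegShift X (1:ℤ)).inv ≫ (shiftFunctor C (1:ℤ)).map g = 0 := h _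
  have h1 : (shiftFunctor C (1:ℤ)).map g = 0 := by
    rw [← Iso.hom_inv_id_assoc (shiftNegShift X (1:ℤ)) ((shiftFunctor C (1:ℤ)).map g), h0,
      comp_zero]
  apply (shiftFunctor C (1:ℤ)).map_injective
  rw [h1, Functor.map_zero]

lemma IY_shift_down {X Y : C} (h : ∀ f : X⟦(-1:ℤ)⟧ ⟶ Y, f = 0) (g : X ⟶ Y⟦(1:ℤ)⟧) : g = 0 := by
  have h0 : (shiftFunctor C (-1:ℤ)).map g ≫ (shiftShiftNeg Y (1:ℤ)).hom = 0 := h _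
  have h1 : (shiftFunctor C (-1:ℤ)).map g = 0 := by
    rw [← Category.comp_id ((shiftFunctor C (-1:ℤ)).map g), ← Iso.hom_inv_id (shiftShiftNeg Y (1:ℤ)),
      ← Category.assoc, h0, zero_comp]
  apply (shiftFunctor C (-1:ℤ)).map_injective
  rw [h1, Functor.map_zero]

lemma IY_shift_neg_zero {X Y : C} (h : ∀ f : X ⟶ Y, f = 0) (g : X⟦(-1:ℤ)⟧ ⟶ Y⟦(-1:ℤ)⟧) : g = 0 := by
  have : g = (shiftFunctor C (-1:ℤ)).map ((shiftFunctor C (-1:ℤ)).preimage g) :=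
    ((shiftFunctor C (-1:ℤ)).map_preimage g).symm
  rw [this, h ((shiftFunctor C (-1:ℤ)).preimage g), Functor.map_zero]

lemma IY_zero_mem {𝒳 : Set C} (h : IsSubcat 𝒳) {A : C} (hA : A ∈ 𝒳) : (0 : C) ∈ 𝒳 := by
  have e : A ≅ (0 : C) ⊞ A := by
    refine ⟨biprod.inr, biprod.snd, by simp, ?_⟩
    apply biprod.hom_ext'
    · apply (isZero_zero C).eq_of_src
    · simp
  exact (h.mem_of_biprod (h.mem_of_iso e hA)).1

lemma IY_retract_mem {𝒳 : Set C} (h : IsSubcat 𝒳) {X Z : C} (i : X ⟶ Z) (p : Z ⟶ X)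
    (hip : i ≫ p = 𝟙 X) (hZ : Z ∈ 𝒳) : X ∈ 𝒳 := by
  obtain ⟨Y, q, r, hT⟩ := Pretriangulated.distinguished_cocone_triangle i
  have h1 : r ≫ i⟦(1:ℤ)⟧' = 0 := comp_distTriang_mor_zero₃₁ _ hT
  have hr : r = 0 := by
    have : r = r ≫ (i ≫ p)⟦(1:ℤ)⟧' := by rw [hip]; simp
    rw [this, Functor.map_comp, ← Category.assoc, h1, zero_comp]
  obtain ⟨e, -, -⟩ := exists_iso_binaryBiproduct_of_distTriang _ hT hr
  exact (h.mem_of_biprod (h.mem_of_iso e hZ)).1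

lemma IY_dist_iso₁ {T : Triangle C} (hT : T ∈ distTriang C) {A : C} (e : A ≅ T.obj₁) :
    Triangle.mk (e.hom ≫ T.mor₁) T.mor₂ (T.mor₃ ≫ e.inv⟦(1:ℤ)⟧') ∈ distTriang C := by
  refine isomorphic_distinguished _ hT _ ?_
  exact Triangle.isoMk _ _ e (Iso.refl _) (Iso.refl _) (by simp [Triangle.mk]) (by simp [Triangle.mk])
    (by simp [Triangle.mk, ← Functor.map_comp])

lemma IY_dist_iso₂ {T : Triangle C} (hT : T ∈ distTriang C) {Z : C} (e : Z ≅ T.obj₂) :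
    Triangle.mk (T.mor₁ ≫ e.inv) (e.hom ≫ T.mor₂) T.mor₃ ∈ distTriang C := by
  refine isomorphic_distinguished _ hT _ ?_
  exact Triangle.isoMk _ _ (Iso.refl _) e (Iso.refl _) (by simp [Triangle.mk]) (by simp [Triangle.mk]) (by simp [Triangle.mk])

lemma IY_dist_iso₃ {T : Triangle C} (hT : T ∈ distTriang C) {B : C} (e : T.obj₃ ≅ B) :
    Triangle.mk T.mor₁ (T.mor₂ ≫ e.hom) (e.inv ≫ T.mor₃) ∈ distTriang C := by
  refine isomorphic_distinguished _ hT _ ?_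
  exact Triangle.isoMk _ _ (Iso.refl _) (Iso.refl _) e.symm (by simp [Triangle.mk]) (by simp [Triangle.mk]) (by simp [Triangle.mk])

lemma IY_yoneda_exact₁ (T : Triangle C) (hT : T ∈ distTriang C) {Z : C} (e : T.obj₁ ⟶ Z)
    (he : T.mor₃ ≫ e⟦(1:ℤ)⟧' = 0) : ∃ ρ : T.obj₂ ⟶ Z, e = T.mor₁ ≫ ρ := by
  have h0 : (T.invRotate).mor₁ ≫ e = 0 := by
    dsimp [Triangle.invRotate]
    have nat := (shiftEquiv C (1:ℤ)).unitIso.inv.naturality e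
    dsimp at nat
    erw [Preadditive.neg_comp, Category.assoc]
    erw [← nat, ← Functor.map_comp_assoc, he, Functor.map_zero, zero_comp, neg_zero]
    rfl
  obtain ⟨ρ, hρ⟩ := Triangle.yoneda_exact₂ _ (inv_rot_of_distTriang _ hT) e h0
  exact ⟨ρ, hρ⟩

lemma IY_mor₁_rightApprox {D N B : C} {f : D ⟶ N} {g : N ⟶ B} {h : B ⟶ D⟦(1:ℤ)⟧}
    (hT : Triangle.mk f g h ∈ distTriang C) {D'' : C}
    (hB : ∀ φ : D'' ⟶ B, φ = 0) (φ : D'' ⟶ N) : ∃ ψ : D'' ⟶ D, ψ ≫ f = φ := by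
  obtain ⟨ψ, hψ⟩ := Triangle.coyoneda_exact₂ _ hT φ (hB _)
  exact ⟨ψ, hψ.symm⟩

lemma IY_mor₂_rightApprox {X D N : C} {b : X ⟶ D} {c : D ⟶ N} {d : N ⟶ X⟦(1:ℤ)⟧}
    (hT : Triangle.mk b c d ∈ distTriang C) {D'' : C}
    (hX : ∀ φ : D'' ⟶ X⟦(1:ℤ)⟧, φ = 0) (φ : D'' ⟶ N) : ∃ ψ : D'' ⟶ D, ψ ≫ c = φ := by
  obtain ⟨ψ, hψ⟩ := Triangle.coyoneda_exact₃ _ hT φ (hX _)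
  exact ⟨ψ, hψ.symm⟩

lemma IY_mor₁_leftApprox {X D N : C} {b : X ⟶ D} {c : D ⟶ N} {d : N ⟶ X⟦(1:ℤ)⟧}
    (hT : Triangle.mk b c d ∈ distTriang C) {D'' : C}
    (hN : ∀ ψ : N ⟶ D''⟦(1:ℤ)⟧, ψ = 0) (φ : X ⟶ D'') : ∃ ψ : D ⟶ D'', b ≫ ψ = φ := by
  obtain ⟨ψ, hψ⟩ := IY_yoneda_exact₁ _ hT φ (hN _)
  exact ⟨ψ, hψ.symm⟩

lemma IY_mor₂_leftApprox {A X D : C} {a : A ⟶ X} {b : X ⟶ D} {c : D ⟶ A⟦(1:ℤ)⟧}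
    (hT : Triangle.mk a b c ∈ distTriang C) {D'' : C}
    (hA : ∀ ψ : A ⟶ D'', ψ = 0) (φ : X ⟶ D'') : ∃ ψ : D ⟶ D'', b ≫ ψ = φ := by
  obtain ⟨ψ, hψ⟩ := Triangle.yoneda_exact₂ _ hT φ (by
    have : a ≫ φ = (0 : A ⟶ D'') := hA _
    exact this)
  exact ⟨ψ, hψ.symm⟩

lemma IY_retract_pos3 {D N B D' B' : C}
    (f : D ⟶ N) (g : N ⟶ B) (h : B ⟶ D⟦(1:ℤ)⟧)
    (f' : D' ⟶ N) (g' : N ⟶ B') (h' : B' ⟶ D'⟦(1:ℤ)⟧)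
    (hT : Triangle.mk f g h ∈ distTriang C) (hT' : Triangle.mk f' g' h' ∈ distTriang C)
    (hu : ∃ u : D ⟶ D', u ≫ f' = f) (hv : ∃ v : D' ⟶ D, v ≫ f = f') :
    ∃ (i : B' ⟶ B ⊞ (D'⟦(1:ℤ)⟧)) (p : B ⊞ (D'⟦(1:ℤ)⟧) ⟶ B'), i ≫ p = 𝟙 B' := by
  obtain ⟨u, hu⟩ := hu
  obtain ⟨v, hv⟩ := hv
  obtain ⟨w, hw₁, hw₂⟩ := complete_distinguished_triangle_morphism _ _ hT hT' u (𝟙 N)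
    (by erw [Category.comp_id, hu]; rfl)
  obtain ⟨w', hw'₁, hw'₂⟩ := complete_distinguished_triangle_morphism _ _ hT' hT v (𝟙 N)
    (by erw [Category.comp_id, hv]; rfl)
  dsimp only [Triangle.mk] at w hw₁ hw₂ w' hw'₁ hw'₂
  have e1 : g' ≫ w' = g := by simpa using hw'₁
  have e2 : g ≫ w = g' := by simpa using hw₁
  have hcomp : g' ≫ (w' ≫ w - 𝟙 B') = 0 := by
    rw [comp_sub, ← Category.assoc, e1, e2, Category.comp_id, sub_self]
  obtain ⟨ρ, hρ⟩ := Triangle.yoneda_exact₃ _ hT' (w' ≫ w - 𝟙 B') hcomp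
  dsimp only [Triangle.mk] at ρ hρ
  refine ⟨biprod.lift w' h', biprod.desc w (-ρ), ?_⟩
  rw [biprod.lift_desc, comp_neg, ← sub_eq_add_neg]
  rw [← hρ, sub_sub_cancel]

lemma IY_retract_pos3' {X D Y D' Y' : C}
    (b : X ⟶ D) (q : D ⟶ Y) (r : Y ⟶ X⟦(1:ℤ)⟧)
    (b' : X ⟶ D') (q' : D' ⟶ Y') (r' : Y' ⟶ X⟦(1:ℤ)⟧)
    (hT : Triangle.mk b q r ∈ distTriang C) (hT' : Triangle.mk b' q' r' ∈ distTriang C)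
    (hu : ∃ u : D ⟶ D', b ≫ u = b') (hv : ∃ v : D' ⟶ D, b' ≫ v = b) :
    ∃ (i : Y ⟶ Y' ⊞ D) (p : Y' ⊞ D ⟶ Y), i ≫ p = 𝟙 Y := by
  obtain ⟨u, hu⟩ := hu
  obtain ⟨v, hv⟩ := hv
  obtain ⟨w, hw₁, hw₂⟩ := complete_distinguished_triangle_morphism _ _ hT hT' (𝟙 X) u
    (by erw [Category.id_comp, hu]; rfl)
  obtain ⟨w', hw'₁, hw'₂⟩ := complete_distinguished_triangle_morphism _ _ hT' hT (𝟙 X) v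
    (by erw [Category.id_comp, hv]; rfl)
  dsimp only [Triangle.mk] at w hw₁ hw₂ w' hw'₁ hw'₂
  have e1 : w ≫ r' = r := by
    have := hw₂
    rw [CategoryTheory.Functor.map_id, Category.comp_id] at this
    exact this.symm
  have e2 : w' ≫ r = r' := by
    have := hw'₂
    rw [CategoryTheory.Functor.map_id, Category.comp_id] at this
    exact this.symm
  have hcomp : (w ≫ w' - 𝟙 Y) ≫ r = 0 := by
    rw [sub_comp, Category.assoc, e2, e1, Category.id_comp, sub_self]
  obtain ⟨ρ, hρ⟩ := Triangle.coyoneda_exact₃ _ hT (w ≫ w' - 𝟙 Y) hcomp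
  dsimp only [Triangle.mk] at ρ hρ
  refine ⟨biprod.lift w ρ, biprod.desc w' (-q), ?_⟩
  rw [biprod.lift_desc, comp_neg, ← sub_eq_add_neg]
  rw [← hρ, sub_sub_cancel]

lemma IY_retract_pos1 {X D N M D' : C}
    (b : X ⟶ D) (c : D ⟶ N) (d : N ⟶ X⟦(1:ℤ)⟧)
    (b' : M ⟶ D') (c' : D' ⟶ N) (d' : N ⟶ M⟦(1:ℤ)⟧)
    (hT : Triangle.mk b c d ∈ distTriang C) (hT' : Triangle.mk b' c' d' ∈ distTriang C)
    (hu : ∃ u : D ⟶ D', u ≫ c' = c) (hv : ∃ v : D' ⟶ D, v ≫ c = c') :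
    ∃ (i : X ⟶ M ⊞ D) (p : M ⊞ D ⟶ X), i ≫ p = 𝟙 X := by
  obtain ⟨u, hu⟩ := hu
  obtain ⟨v, hv⟩ := hv
  obtain ⟨s, hs₁, hs₂⟩ := complete_distinguished_triangle_morphism₁ _ _ hT hT' u (𝟙 N)
    (by erw [Category.comp_id, hu]; rfl)
  obtain ⟨t, ht₁, ht₂⟩ := complete_distinguished_triangle_morphism₁ _ _ hT' hT v (𝟙 N)
    (by erw [Category.comp_id, hv]; rfl)
  dsimp only [Triangle.mk] at s hs₁ hs₂ t ht₁ ht₂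
  rw [Category.id_comp] at hs₂ ht₂
  have hd : d ≫ ((s ≫ t) - 𝟙 X)⟦(1:ℤ)⟧' = 0 := by
    rw [Functor.map_sub, Functor.map_comp, comp_sub, CategoryTheory.Functor.map_id,
      Category.comp_id, ← Category.assoc, hs₂, ht₂, sub_self]
  obtain ⟨ρ, hρ⟩ := IY_yoneda_exact₁ _ hT (s ≫ t - 𝟙 X) hd
  dsimp only [Triangle.mk] at ρ hρ
  refine ⟨biprod.lift s b, biprod.desc t (-ρ), ?_⟩
  rw [biprod.lift_desc, comp_neg, ← sub_eq_add_neg, ← hρ, sub_sub_cancel]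

noncomputable def IY_biprodPiIso (F : WalkingPair → C) [HasProduct F] :
    (F WalkingPair.left ⊞ F WalkingPair.right) ≅ ∏ᶜ F where
  hom := Pi.lift (fun j => match j with
    | WalkingPair.left => biprod.fst
    | WalkingPair.right => biprod.snd)
  inv := biprod.lift (Pi.π F WalkingPair.left) (Pi.π F WalkingPair.right)
  hom_inv_id := by apply biprod.hom_ext <;> simp
  inv_hom_id := by
    apply limit.hom_ext
    rintro ⟨(_ | _)⟩ <;> simp

lemma IY_biprod_distTriang {A₁ B₁ Y₁ A₂ B₂ Y₂ : C}
    (f₁ : A₁ ⟶ B₁) (g₁ : B₁ ⟶ Y₁) (h₁ : Y₁ ⟶ A₁⟦(1:ℤ)⟧)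
    (f₂ : A₂ ⟶ B₂) (g₂ : B₂ ⟶ Y₂) (h₂ : Y₂ ⟶ A₂⟦(1:ℤ)⟧)
    (hT₁ : Triangle.mk f₁ g₁ h₁ ∈ distTriang C) (hT₂ : Triangle.mk f₂ g₂ h₂ ∈ distTriang C) :
    ∃ h : Y₁ ⊞ Y₂ ⟶ (A₁ ⊞ A₂)⟦(1:ℤ)⟧,
      Triangle.mk (biprod.map f₁ f₂) (biprod.map g₁ g₂) h ∈ distTriang C := by
  let T : WalkingPair → Triangle C := fun j => match j with
    | WalkingPair.left => Triangle.mk f₁ g₁ h₁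
    | WalkingPair.right => Triangle.mk f₂ g₂ h₂
  have hT : ∀ j, T j ∈ distTriang C := by rintro (_ | _); exacts [hT₁, hT₂]
  have hP := productTriangle_distinguished T hT
  let P := productTriangle T
  let e₁ : (A₁ ⊞ A₂ : C) ≅ ∏ᶜ (fun j => (T j).obj₁) := IY_biprodPiIso (fun j => (T j).obj₁)
  let e₂ : (B₁ ⊞ B₂ : C) ≅ ∏ᶜ (fun j => (T j).obj₂) := IY_biprodPiIso (fun j => (T j).obj₂)
  let e₃ : (Y₁ ⊞ Y₂ : C) ≅ ∏ᶜ (fun j => (T j).obj₃) := IY_biprodPiIso (fun j => (T j).obj₃)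
  refine ⟨e₃.hom ≫ P.mor₃ ≫ (shiftFunctor C (1:ℤ)).map e₁.inv, ?_⟩
  refine isomorphic_distinguished _ hP _ ?_
  refine Triangle.isoMk _ _ e₁ e₂ e₃ ?_ ?_ ?_
  · show biprod.map f₁ f₂ ≫ e₂.hom = e₁.hom ≫ Limits.Pi.map (fun j => (T j).mor₁)
    apply Pi.hom_ext
    rintro (_ | _)
    · rw [Category.assoc, Category.assoc, Pi.map_π]
      simp only [e₁, e₂, IY_biprodPiIso]
      erw [Pi.lift_π, Pi.lift_π_assoc]
      exact biprod.map_fst f₁ f₂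
    · rw [Category.assoc, Category.assoc, Pi.map_π]
      simp only [e₁, e₂, IY_biprodPiIso]
      erw [Pi.lift_π, Pi.lift_π_assoc]
      exact biprod.map_snd f₁ f₂
  · show biprod.map g₁ g₂ ≫ e₃.hom = e₂.hom ≫ Limits.Pi.map (fun j => (T j).mor₂)
    apply Pi.hom_ext
    rintro (_ | _)
    · rw [Category.assoc, Category.assoc, Pi.map_π]
      simp only [e₂, e₃, IY_biprodPiIso]
      erw [Pi.lift_π, Pi.lift_π_assoc]
      exact biprod.map_fst g₁ g₂
    · rw [Category.assoc, Category.assoc, Pi.map_π]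
      simp only [e₂, e₃, IY_biprodPiIso]
      erw [Pi.lift_π, Pi.lift_π_assoc]
      exact biprod.map_snd g₁ g₂
  · show (e₃.hom ≫ P.mor₃ ≫ (shiftFunctor C 1).map e₁.inv) ≫ (shiftFunctor C 1).map e₁.hom =
      e₃.hom ≫ P.mor₃
    erw [Category.assoc, Category.assoc, ← Functor.map_comp, Iso.inv_hom_id,
      CategoryTheory.Functor.map_id, Category.comp_id]
    rfl

noncomputable def IY_shiftBiprod (n : ℤ) (X Y : C) : ((X ⊞ Y)⟦n⟧) ≅ (X⟦n⟧ ⊞ Y⟦n⟧) :=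
  have : PreservesBinaryBiproduct X Y (shiftFunctor C n) :=
    preservesBinaryBiproduct_of_preservesBiproduct _ X Y
  (shiftFunctor C n).mapBiprod X Y

end IYHelpers

section IYMain

set_option linter.unusedSectionVars false
set_option maxHeartbeats 1000000

open CategoryTheory.Preadditive ZeroObject

lemma IY_sideA (𝒟 : Set C) (hD : IsSubcat 𝒟) (hrigid : homZero 𝒟 (shiftSet 𝒟 (1:ℤ)))
    (ℳ : Set C) (hM : IsSubcat ℳ) (hDM : 𝒟 ⊆ ℳ)
    (hMsub : ℳ ⊆ {A : C | HasLeftApprox 𝒟 A} ∩ shiftRightPerp 𝒟) :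
    IsSubcat (muInv ℳ 𝒟) ∧ 𝒟 ⊆ muInv ℳ 𝒟 ∧
      muInv ℳ 𝒟 ⊆ {A : C | HasRightApprox 𝒟 A} ∩ leftPerpShift 𝒟 ∧
      mu (muInv ℳ 𝒟) 𝒟 = ℳ := by
  have rig1 : ∀ {D1 D2 : C}, D1 ∈ 𝒟 → D2 ∈ 𝒟 → ∀ f : D1 ⟶ (D2⟦(1:ℤ)⟧), f = 0 := by
    intro D1 D2 h1 h2 f
    exact hrigid h1 ⟨D2, h2, ⟨Iso.refl _⟩⟩ f
  have perpM : ∀ {M : C}, M ∈ ℳ → ∀ {D'' : C}, D'' ∈ 𝒟 → ∀ φ : D'' ⟶ (M⟦(1:ℤ)⟧), φ = 0 := by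
    intro M hMm D'' hD'' φ
    exact IY_shift_down (fun f => (hMsub hMm).2 D'' hD'' f) φ
  have perpB : ∀ {M B : C}, M ∈ ℳ → ((M⟦(1:ℤ)⟧) ≅ B) → ∀ {D'' : C}, D'' ∈ 𝒟 →
      ∀ φ : D'' ⟶ B, φ = 0 := by
    intro M B hMm e D'' hD'' φ
    have h0 : φ ≫ e.inv = 0 := perpM hMm hD'' _
    rw [← Category.comp_id φ, ← e.inv_hom_id, ← Category.assoc, h0, zero_comp]
  -- key construction from left approximations
  have main : ∀ {M : C}, M ∈ ℳ → ∃ (D N : C) (f : M ⟶ D) (g : D ⟶ N) (h : N ⟶ M⟦(1:ℤ)⟧),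
      D ∈ 𝒟 ∧ (Triangle.mk f g h ∈ distTriang C) ∧ N ∈ muInv ℳ 𝒟 := by
    intro M hMm
    obtain ⟨D, hD', f, happ⟩ := (hMsub hMm).1
    obtain ⟨N, g, h, hT⟩ := Pretriangulated.distinguished_cocone_triangle f
    refine ⟨D, N, f, g, h, hD', hT, ⟨D, M⟦(1:ℤ)⟧, g, h, -f⟦(1:ℤ)⟧', hD',
      ⟨M, hMm, ⟨Iso.refl _⟩⟩, rot_of_distTriang _ hT⟩, ?_⟩
    intro D'' hD'' φ
    have hg : g ≫ φ = 0 := rig1 hD' hD'' _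
    obtain ⟨ψ', hψ'⟩ := Triangle.yoneda_exact₃ _ hT φ hg
    obtain ⟨χ, hχ⟩ := happ D'' hD'' ((shiftFunctor C (1:ℤ)).preimage ψ')
    have hψ'' : ψ' = f⟦(1:ℤ)⟧' ≫ χ⟦(1:ℤ)⟧' := by
      rw [← Functor.map_comp, hχ]
      exact ((shiftFunctor C (1:ℤ)).map_preimage ψ').symm
    have hz : h ≫ f⟦(1:ℤ)⟧' = 0 := comp_distTriang_mor_zero₃₁ _ hT
    dsimp only [Triangle.mk] at hψ'
    rw [hψ', hψ'', ← Category.assoc, hz, zero_comp]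
  -- right approximations of objects of muInv
  have rap : ∀ {N : C}, N ∈ muInv ℳ 𝒟 → ∃ (D0 : C) (f0 : D0 ⟶ N), D0 ∈ 𝒟 ∧
      (∀ D'' ∈ 𝒟, ∀ φ : D'' ⟶ N, ∃ ψ, ψ ≫ f0 = φ) := by
    intro N hN
    obtain ⟨A, B, f, g, h, hA, ⟨M0, hM0, ⟨e⟩⟩, hT⟩ := hN.1
    exact ⟨A, f, hA, fun D'' hD'' φ => IY_mor₁_rightApprox hT (perpB hM0 e hD'') φ⟩
  -- 𝒟 ⊆ muInv
  have hA2 : 𝒟 ⊆ muInv ℳ 𝒟 := by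
    intro D0 hD0
    refine ⟨⟨D0, (0:C), 𝟙 D0, 0, 0, hD0,
      ⟨(0:C), IY_zero_mem hM (hDM hD0), ⟨(shiftFunctor C (1:ℤ)).mapZeroObject⟩⟩,
      contractible_distinguished D0⟩, ?_⟩
    intro D'' hD'' φ
    exact rig1 hD0 hD'' φ
  -- closure under isos
  have hIso : ∀ {N N' : C}, (N ≅ N') → N ∈ muInv ℳ 𝒟 → N' ∈ muInv ℳ 𝒟 := by
    intro N N' e hN
    obtain ⟨⟨A, B, f, g, h, hA, hBm, hT⟩, hperp⟩ := hN
    refine ⟨⟨A, B, f ≫ e.hom, e.inv ≫ g, h, hA, hBm, ?_⟩, ?_⟩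
    · refine isomorphic_distinguished _ hT _ ?_
      exact Triangle.isoMk _ _ (Iso.refl _) e.symm (Iso.refl _) (by simp [Triangle.mk]) (by simp [Triangle.mk]) (by simp [Triangle.mk])
    · intro D'' hD'' φ
      have h0 : e.hom ≫ φ = 0 := hperp D'' hD'' _
      rw [← Category.id_comp φ, ← e.inv_hom_id, Category.assoc, h0, comp_zero]
  -- closure under direct sums
  have hBiprod : ∀ {N₁ N₂ : C}, N₁ ∈ muInv ℳ 𝒟 → N₂ ∈ muInv ℳ 𝒟 →
      (N₁ ⊞ N₂) ∈ muInv ℳ 𝒟 := by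
    intro N₁ N₂ hN₁ hN₂
    obtain ⟨⟨A₁, B₁, f₁, g₁, h₁, hA₁, ⟨M₁, hM₁, ⟨e₁⟩⟩, hT₁⟩, hp₁⟩ := hN₁
    obtain ⟨⟨A₂, B₂, f₂, g₂, h₂, hA₂, ⟨M₂, hM₂, ⟨e₂⟩⟩, hT₂⟩, hp₂⟩ := hN₂
    obtain ⟨hS, hTS⟩ := IY_biprod_distTriang f₁ g₁ h₁ f₂ g₂ h₂ hT₁ hT₂
    refine ⟨⟨A₁ ⊞ A₂, B₁ ⊞ B₂, biprod.map f₁ f₂, biprod.map g₁ g₂, hS, hD.biprod_mem hA₁ hA₂,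
      ⟨M₁ ⊞ M₂, hM.biprod_mem hM₁ hM₂,
        ⟨IY_shiftBiprod 1 M₁ M₂ ≪≫ biprod.mapIso e₁ e₂⟩⟩, hTS⟩, ?_⟩
    intro D'' hD'' φ
    refine biprod.hom_ext' _ _ ?_ ?_ <;> simp only [comp_zero]
    · exact hp₁ D'' hD'' _
    · exact hp₂ D'' hD'' _
  -- closure under direct summands
  have hKey : ∀ {P Q : C}, (P ⊞ Q) ∈ muInv ℳ 𝒟 → P ∈ muInv ℳ 𝒟 := by
    intro P Q hPQ
    obtain ⟨⟨A, B, f, g, h, hA, ⟨M0, hM0, ⟨e⟩⟩, hT⟩, hperp⟩ := hPQ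
    have hrap : ∀ {D'' : C}, D'' ∈ 𝒟 → ∀ φ : D'' ⟶ (P ⊞ Q), ∃ ψ, ψ ≫ f = φ :=
      fun hD'' φ => IY_mor₁_rightApprox hT (perpB hM0 e hD'') φ
    have happP : ∀ {D'' : C}, D'' ∈ 𝒟 → ∀ φ : D'' ⟶ P,
        ∃ ψ : D'' ⟶ A, ψ ≫ (f ≫ biprod.fst) = φ := by
      intro D'' hD'' φ
      obtain ⟨ψ, hψ⟩ := hrap hD'' (φ ≫ biprod.inl)
      exact ⟨ψ, by rw [← Category.assoc, hψ, Category.assoc, biprod.inl_fst, Category.comp_id]⟩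
    have happQ : ∀ {D'' : C}, D'' ∈ 𝒟 → ∀ φ : D'' ⟶ Q,
        ∃ ψ : D'' ⟶ A, ψ ≫ (f ≫ biprod.snd) = φ := by
      intro D'' hD'' φ
      obtain ⟨ψ, hψ⟩ := hrap hD'' (φ ≫ biprod.inr)
      exact ⟨ψ, by rw [← Category.assoc, hψ, Category.assoc, biprod.inr_snd, Category.comp_id]⟩
    obtain ⟨YP, gP, hP, hTP⟩ := Pretriangulated.distinguished_cocone_triangle (f ≫ biprod.fst)
    obtain ⟨YQ, gQ, hQ, hTQ⟩ := Pretriangulated.distinguished_cocone_triangle (f ≫ biprod.snd)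
    obtain ⟨hS, hTS⟩ := IY_biprod_distTriang _ gP hP _ gQ hQ hTP hTQ
    have happS : ∀ {D'' : C}, D'' ∈ 𝒟 → ∀ φ : D'' ⟶ (P ⊞ Q),
        ∃ ψ : D'' ⟶ (A ⊞ A), ψ ≫ biprod.map (f ≫ biprod.fst) (f ≫ biprod.snd) = φ := by
      intro D'' hD'' φ
      obtain ⟨ψ₁, hψ₁⟩ := happP hD'' (φ ≫ biprod.fst)
      obtain ⟨ψ₂, hψ₂⟩ := happQ hD'' (φ ≫ biprod.snd)
      refine ⟨biprod.lift ψ₁ ψ₂, ?_⟩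
      apply biprod.hom_ext
      · rw [Category.assoc, biprod.map_fst, ← Category.assoc, biprod.lift_fst, hψ₁]
      · rw [Category.assoc, biprod.map_snd, ← Category.assoc, biprod.lift_snd, hψ₂]
    obtain ⟨i, p, hip⟩ := IY_retract_pos3 f g h
      (biprod.map (f ≫ biprod.fst) (f ≫ biprod.snd)) (biprod.map gP gQ) hS hT hTS
      (happS hA f) (hrap (hD.biprod_mem hA hA) _)
    have hZ : ((B ⊞ ((A ⊞ A)⟦(1:ℤ)⟧))⟦(-1:ℤ)⟧) ∈ ℳ := by
      have isoB : M0 ≅ (B⟦(-1:ℤ)⟧) :=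
        (shiftShiftNeg M0 1).symm ≪≫ (shiftFunctor C (-1:ℤ)).mapIso e
      have isoAA : (A ⊞ A : C) ≅ (((A ⊞ A)⟦(1:ℤ)⟧)⟦(-1:ℤ)⟧) := (shiftShiftNeg (A ⊞ A) 1).symm
      have isoZ : (M0 ⊞ (A ⊞ A) : C) ≅ ((B ⊞ ((A ⊞ A)⟦(1:ℤ)⟧))⟦(-1:ℤ)⟧) :=
        biprod.mapIso isoB isoAA ≪≫ (IY_shiftBiprod (-1) B ((A ⊞ A)⟦(1:ℤ)⟧)).symm
      exact hM.mem_of_iso isoZ (hM.biprod_mem hM0 (hDM (hD.biprod_mem hA hA)))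
    have hY : ((YP ⊞ YQ)⟦(-1:ℤ)⟧) ∈ ℳ :=
      IY_retract_mem hM ((shiftFunctor C (-1:ℤ)).map i) ((shiftFunctor C (-1:ℤ)).map p)
        (by rw [← Functor.map_comp, hip, CategoryTheory.Functor.map_id]) hZ
    have hYP : ((YP⟦(-1:ℤ)⟧) : C) ∈ ℳ :=
      (hM.mem_of_biprod (hM.mem_of_iso (IY_shiftBiprod (-1) YP YQ) hY)).1
    refine ⟨⟨A, YP, f ≫ biprod.fst, gP, hP, hA,
      ⟨YP⟦(-1:ℤ)⟧, hYP, ⟨shiftNegShift YP 1⟩⟩, hTP⟩, ?_⟩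
    intro D'' hD'' φ
    have h0 : biprod.fst ≫ φ = 0 := hperp D'' hD'' _
    rw [← Category.id_comp φ, ← biprod.inl_fst, Category.assoc, h0, comp_zero]
  -- the bijection equation
  have hA4 : mu (muInv ℳ 𝒟) 𝒟 = ℳ := by
    apply Set.Subset.antisymm
    · intro X hX
      obtain ⟨⟨A, B, f, g, h, ⟨N, hN, ⟨e⟩⟩, hB, hT⟩, hXperp⟩ := hX
      have hrot := rot_of_distTriang _ hT
      have ε : ((A⟦(1:ℤ)⟧) : C) ≅ N :=
        ((shiftFunctor C (1:ℤ)).mapIso e).symm ≪≫ shiftNegShift N 1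
      have hTX : Triangle.mk g (h ≫ ε.hom) (ε.inv ≫ (-(f⟦(1:ℤ)⟧'))) ∈ distTriang C :=
        IY_dist_iso₃ hrot ε
      obtain ⟨⟨A', B', f', g', h', hA', ⟨M0, hM0, ⟨e'⟩⟩, hT'⟩, hNperp⟩ := hN
      have hT₀ : Triangle.mk f' (g' ≫ e'.inv) (e'.hom ≫ h') ∈ distTriang C :=
        IY_dist_iso₃ hT' e'.symm
      have hT₁ := inv_rot_of_distTriang _ hT₀
      have ι : M0 ≅ (((M0⟦(1:ℤ)⟧))⟦(-1:ℤ)⟧) := (shiftShiftNeg M0 1).symm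
      have hT₂ := IY_dist_iso₁ hT₁ ι
      have hu : ∃ u : B ⟶ A', u ≫ f' = h ≫ ε.hom :=
        IY_mor₁_rightApprox hT' (perpB hM0 e' hB) _
      have hv : ∃ v : A' ⟶ B, v ≫ (h ≫ ε.hom) = f' := by
        refine IY_mor₂_rightApprox hTX ?_ f'
        intro φ
        exact IY_shift_down (fun ff => hXperp A' hA' ff) φ
      obtain ⟨i, p, hip⟩ := IY_retract_pos1 _ _ _ _ _ _ hTX hT₂ hu hv
      exact IY_retract_mem hM i p hip (hM.biprod_mem hM0 (hDM hB))
    · intro X hXM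
      obtain ⟨D1, N1, f1, g1, h1, hD1, hT1, hN1⟩ := main hXM
      refine ⟨⟨N1⟦(-1:ℤ)⟧, D1, _, _, _, ⟨N1, hN1, ⟨Iso.refl _⟩⟩, hD1,
        inv_rot_of_distTriang _ hT1⟩, (hMsub hXM).2⟩
  refine ⟨⟨fun A B e hA => hIso e hA, fun A B h1 h2 => hBiprod h1 h2,
    fun A B hAB => ⟨hKey hAB, hKey (hIso (biprod.braiding A B) hAB)⟩⟩, hA2, ?_, hA4⟩
  intro N hN
  obtain ⟨D0, f0, hD0, happ0⟩ := rap hN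
  exact ⟨⟨D0, hD0, f0, fun D' hD' g => happ0 D' hD' g⟩, hN.2⟩

end IYMain

section IYMainB

set_option linter.unusedSectionVars false
set_option maxHeartbeats 1000000

open CategoryTheory.Preadditive ZeroObject

lemma IY_sideB (𝒟 : Set C) (hD : IsSubcat 𝒟) (hrigid : homZero 𝒟 (shiftSet 𝒟 (1:ℤ)))
    (𝒩 : Set C) (hN : IsSubcat 𝒩) (hDN : 𝒟 ⊆ 𝒩)
    (hNsub : 𝒩 ⊆ {A : C | HasRightApprox 𝒟 A} ∩ leftPerpShift 𝒟) :
    IsSubcat (mu 𝒩 𝒟) ∧ 𝒟 ⊆ mu 𝒩 𝒟 ∧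
      mu 𝒩 𝒟 ⊆ {A : C | HasLeftApprox 𝒟 A} ∩ shiftRightPerp 𝒟 ∧
      muInv (mu 𝒩 𝒟) 𝒟 = 𝒩 := by
  have rig1 : ∀ {D1 D2 : C}, D1 ∈ 𝒟 → D2 ∈ 𝒟 → ∀ f : D1 ⟶ (D2⟦(1:ℤ)⟧), f = 0 := by
    intro D1 D2 h1 h2 f
    exact hrigid h1 ⟨D2, h2, ⟨Iso.refl _⟩⟩ f
  have perpN : ∀ {N0 : C}, N0 ∈ 𝒩 → ∀ {D'' : C}, D'' ∈ 𝒟 →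
      ∀ φ : (N0⟦(-1:ℤ)⟧) ⟶ D'', φ = 0 := by
    intro N0 hN0 D'' hD'' φ
    exact IY_shift_up (fun f => (hNsub hN0).2 D'' hD'' f) φ
  have perpA : ∀ {N0 A : C}, N0 ∈ 𝒩 → ((N0⟦(-1:ℤ)⟧) ≅ A) → ∀ {D'' : C}, D'' ∈ 𝒟 →
      ∀ φ : A ⟶ D'', φ = 0 := by
    intro N0 A hN0 e D'' hD'' φ
    have h0 : e.hom ≫ φ = 0 := perpN hN0 hD'' _
    rw [← Category.id_comp φ, ← e.inv_hom_id, Category.assoc, h0, comp_zero]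
  -- key construction from right approximations
  have main : ∀ {N0 : C}, N0 ∈ 𝒩 → ∃ (D Y : C) (f : D ⟶ N0) (g : N0 ⟶ Y) (h : Y ⟶ D⟦(1:ℤ)⟧),
      D ∈ 𝒟 ∧ (Triangle.mk f g h ∈ distTriang C) ∧ (Y⟦(-1:ℤ)⟧) ∈ mu 𝒩 𝒟 := by
    intro N0 hN0
    obtain ⟨D, hD', f, happ⟩ := (hNsub hN0).1
    obtain ⟨Y, g, h, hT⟩ := Pretriangulated.distinguished_cocone_triangle f
    refine ⟨D, Y, f, g, h, hD', hT, ⟨N0⟦(-1:ℤ)⟧, D, _, _, _,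
      ⟨N0, hN0, ⟨Iso.refl _⟩⟩, hD',
      inv_rot_of_distTriang _ (inv_rot_of_distTriang _ hT)⟩, ?_⟩
    intro D'' hD'' φ
    refine IY_shift_neg_zero ?_ φ
    intro φ'
    have hz : φ' ≫ h = 0 := rig1 hD'' hD' _
    obtain ⟨ψ, hψ⟩ := Triangle.coyoneda_exact₃ _ hT φ' hz
    obtain ⟨χ, hχ⟩ := happ D'' hD'' ψ
    have h12 : f ≫ g = 0 := comp_distTriang_mor_zero₁₂ _ hT
    dsimp only [Triangle.mk] at hψ
    rw [hψ, ← hχ, Category.assoc, h12, comp_zero]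
  -- left approximations of objects of mu
  have lap : ∀ {X : C}, X ∈ mu 𝒩 𝒟 → ∃ (D0 : C) (b0 : X ⟶ D0), D0 ∈ 𝒟 ∧
      (∀ D'' ∈ 𝒟, ∀ φ : X ⟶ D'', ∃ ψ, b0 ≫ ψ = φ) := by
    intro X hX
    obtain ⟨A, B, f, g, h, ⟨N0, hN0, ⟨e⟩⟩, hB, hT⟩ := hX.1
    exact ⟨B, g, hB, fun D'' hD'' φ => IY_mor₂_leftApprox hT (perpA hN0 e hD'') φ⟩
  -- 𝒟 ⊆ mu
  have hB2 : 𝒟 ⊆ mu 𝒩 𝒟 := by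
    intro D0 hD0
    refine ⟨⟨(0:C)⟦(-1:ℤ)⟧, D0, _, _, _,
      ⟨(0:C), IY_zero_mem hN (hDN hD0), ⟨Iso.refl _⟩⟩, hD0,
      inv_rot_of_distTriang _ (contractible_distinguished D0)⟩, ?_⟩
    intro D'' hD'' φ
    exact IY_shift_up (fun f => rig1 hD'' hD0 f) φ
  -- closure under isos
  have hIso : ∀ {X X' : C}, (X ≅ X') → X ∈ mu 𝒩 𝒟 → X' ∈ mu 𝒩 𝒟 := by
    intro X X' e hX
    obtain ⟨⟨A, B, f, g, h, hAm, hBm, hT⟩, hperp⟩ := hX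
    refine ⟨⟨A, B, f ≫ e.hom, e.inv ≫ g, h, hAm, hBm, ?_⟩, ?_⟩
    · refine isomorphic_distinguished _ hT _ ?_
      exact Triangle.isoMk _ _ (Iso.refl _) e.symm (Iso.refl _) (by simp [Triangle.mk]) (by simp [Triangle.mk]) (by simp [Triangle.mk])
    · intro D'' hD'' φ
      have h0 : φ ≫ e.inv = 0 := hperp D'' hD'' _
      rw [← Category.comp_id φ, ← e.inv_hom_id, ← Category.assoc, h0, zero_comp]
  -- closure under direct sums
  have hBiprod : ∀ {X₁ X₂ : C}, X₁ ∈ mu 𝒩 𝒟 → X₂ ∈ mu 𝒩 𝒟 → (X₁ ⊞ X₂) ∈ mu 𝒩 𝒟 := by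
    intro X₁ X₂ hX₁ hX₂
    obtain ⟨⟨A₁, B₁, f₁, g₁, h₁, ⟨N₁, hN₁, ⟨e₁⟩⟩, hB₁, hT₁⟩, hp₁⟩ := hX₁
    obtain ⟨⟨A₂, B₂, f₂, g₂, h₂, ⟨N₂, hN₂, ⟨e₂⟩⟩, hB₂, hT₂⟩, hp₂⟩ := hX₂
    obtain ⟨hS, hTS⟩ := IY_biprod_distTriang f₁ g₁ h₁ f₂ g₂ h₂ hT₁ hT₂
    refine ⟨⟨A₁ ⊞ A₂, B₁ ⊞ B₂, biprod.map f₁ f₂, biprod.map g₁ g₂, hS,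
      ⟨N₁ ⊞ N₂, hN.biprod_mem hN₁ hN₂,
        ⟨IY_shiftBiprod (-1) N₁ N₂ ≪≫ biprod.mapIso e₁ e₂⟩⟩, hD.biprod_mem hB₁ hB₂, hTS⟩, ?_⟩
    intro D'' hD'' φ
    refine biprod.hom_ext _ _ ?_ ?_ <;> simp only [zero_comp]
    · exact hp₁ D'' hD'' _
    · exact hp₂ D'' hD'' _
  -- closure under direct summands
  have hKey : ∀ {P Q : C}, (P ⊞ Q) ∈ mu 𝒩 𝒟 → P ∈ mu 𝒩 𝒟 := by
    intro P Q hPQ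
    obtain ⟨⟨A, B, f, g, h, ⟨N0, hN0, ⟨e⟩⟩, hB, hT⟩, hperp⟩ := hPQ
    have hlap : ∀ {D'' : C}, D'' ∈ 𝒟 → ∀ φ : (P ⊞ Q) ⟶ D'', ∃ ψ, g ≫ ψ = φ :=
      fun hD'' φ => IY_mor₂_leftApprox hT (perpA hN0 e hD'') φ
    have happP : ∀ {D'' : C}, D'' ∈ 𝒟 → ∀ φ : P ⟶ D'',
        ∃ ψ : B ⟶ D'', (biprod.inl ≫ g) ≫ ψ = φ := by
      intro D'' hD'' φ
      obtain ⟨ψ, hψ⟩ := hlap hD'' (biprod.fst ≫ φ)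
      exact ⟨ψ, by rw [Category.assoc, hψ, ← Category.assoc, biprod.inl_fst, Category.id_comp]⟩
    have happQ : ∀ {D'' : C}, D'' ∈ 𝒟 → ∀ φ : Q ⟶ D'',
        ∃ ψ : B ⟶ D'', (biprod.inr ≫ g) ≫ ψ = φ := by
      intro D'' hD'' φ
      obtain ⟨ψ, hψ⟩ := hlap hD'' (biprod.snd ≫ φ)
      exact ⟨ψ, by rw [Category.assoc, hψ, ← Category.assoc, biprod.inr_snd, Category.id_comp]⟩
    obtain ⟨YP, qP, rP, hTP⟩ := Pretriangulated.distinguished_cocone_triangle (biprod.inl ≫ g)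
    obtain ⟨YQ, qQ, rQ, hTQ⟩ := Pretriangulated.distinguished_cocone_triangle (biprod.inr ≫ g)
    obtain ⟨hS, hTS⟩ := IY_biprod_distTriang _ qP rP _ qQ rQ hTP hTQ
    have happS : ∀ {D'' : C}, D'' ∈ 𝒟 → ∀ φ : (P ⊞ Q) ⟶ D'',
        ∃ ψ : (B ⊞ B) ⟶ D'',
          biprod.map (biprod.inl ≫ g) (biprod.inr ≫ g) ≫ ψ = φ := by
      intro D'' hD'' φ
      obtain ⟨ψ₁, hψ₁⟩ := happP hD'' (biprod.inl ≫ φ)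
      obtain ⟨ψ₂, hψ₂⟩ := happQ hD'' (biprod.inr ≫ φ)
      refine ⟨biprod.desc ψ₁ ψ₂, ?_⟩
      apply biprod.hom_ext'
      · rw [← Category.assoc, biprod.inl_map, Category.assoc, biprod.inl_desc]
        exact hψ₁
      · rw [← Category.assoc, biprod.inr_map, Category.assoc, biprod.inr_desc]
        exact hψ₂
    -- the normalized triangle (P ⊞ Q, B, N0)
    have hrot := rot_of_distTriang _ hT
    have ε : ((A⟦(1:ℤ)⟧) : C) ≅ N0 :=
      ((shiftFunctor C (1:ℤ)).mapIso e).symm ≪≫ shiftNegShift N0 1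
    have hTX : Triangle.mk g (h ≫ ε.hom) (ε.inv ≫ (-(f⟦(1:ℤ)⟧'))) ∈ distTriang C :=
      IY_dist_iso₃ hrot ε
    obtain ⟨i, p, hip⟩ := IY_retract_pos3'
      (biprod.map (biprod.inl ≫ g) (biprod.inr ≫ g)) (biprod.map qP qQ) hS
      g (h ≫ ε.hom) (ε.inv ≫ (-(f⟦(1:ℤ)⟧'))) hTS hTX
      (happS hB g) (hlap (hD.biprod_mem hB hB) (biprod.map (biprod.inl ≫ g) (biprod.inr ≫ g)))
    have hYsum : (YP ⊞ YQ : C) ∈ 𝒩 :=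
      IY_retract_mem hN i p hip (hN.biprod_mem hN0 (hDN (hD.biprod_mem hB hB)))
    have hYP : YP ∈ 𝒩 := (hN.mem_of_biprod hYsum).1
    refine ⟨⟨YP⟦(-1:ℤ)⟧, B, _, _, _, ⟨YP, hYP, ⟨Iso.refl _⟩⟩, hB,
      inv_rot_of_distTriang _ hTP⟩, ?_⟩
    intro D'' hD'' φ
    have h0 : φ ≫ biprod.inl = 0 := hperp D'' hD'' _
    rw [← Category.comp_id φ, ← biprod.inl_fst, ← Category.assoc, h0, zero_comp]
  -- the bijection equation
  have hB4 : muInv (mu 𝒩 𝒟) 𝒟 = 𝒩 := by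
    apply Set.Subset.antisymm
    · intro X hX
      obtain ⟨⟨A0, B0, f0, g0, h0, hA0, ⟨M0, hM0, ⟨e0⟩⟩, hT0⟩, hXperp⟩ := hX
      have hT₀ : Triangle.mk f0 (g0 ≫ e0.inv) (e0.hom ≫ h0) ∈ distTriang C :=
        IY_dist_iso₃ hT0 e0.symm
      have hT₁ := inv_rot_of_distTriang _ hT₀
      have ι : M0 ≅ (((M0⟦(1:ℤ)⟧))⟦(-1:ℤ)⟧) := (shiftShiftNeg M0 1).symm
      have hT₂ := IY_dist_iso₁ hT₁ ι
      -- hT₂ : (M0, A0, X)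
      have hmlap : ∀ {D'' : C}, D'' ∈ 𝒟 → ∀ φ : M0 ⟶ D'',
          ∃ ψ, (ι.hom ≫ (Triangle.mk f0 (g0 ≫ e0.inv) (e0.hom ≫ h0)).invRotate.mor₁) ≫ ψ = φ :=
        fun hD'' φ => IY_mor₁_leftApprox hT₂ (fun ψ => hXperp _ hD'' ψ) φ
      -- the normalized triangle (M0, B', N0') from hM0 ∈ mu
      obtain ⟨A', B', f', g', h', ⟨N0', hN0', ⟨e'⟩⟩, hB', hT'⟩ := hM0.1
      have hglap : ∀ {D'' : C}, D'' ∈ 𝒟 → ∀ φ : M0 ⟶ D'', ∃ ψ, g' ≫ ψ = φ :=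
        fun hD'' φ => IY_mor₂_leftApprox hT' (perpA hN0' e' hD'') φ
      have hrot' := rot_of_distTriang _ hT'
      have ε' : ((A'⟦(1:ℤ)⟧) : C) ≅ N0' :=
        ((shiftFunctor C (1:ℤ)).mapIso e').symm ≪≫ shiftNegShift N0' 1
      have hTN : Triangle.mk g' (h' ≫ ε'.hom) (ε'.inv ≫ (-(f'⟦(1:ℤ)⟧'))) ∈ distTriang C :=
        IY_dist_iso₃ hrot' ε'
      obtain ⟨i, p, hip⟩ := IY_retract_pos3' _ _ _
        g' (h' ≫ ε'.hom) (ε'.inv ≫ (-(f'⟦(1:ℤ)⟧'))) hT₂ hTN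
        (hmlap hB' g') (hglap hA0 _)
      exact IY_retract_mem hN i p hip (hN.biprod_mem hN0' (hDN hA0))
    · intro N0 hN0
      obtain ⟨D, Y, f, g, h, hD', hT, hYmu⟩ := main hN0
      refine ⟨⟨D, Y, f, g, h, hD', ⟨Y⟦(-1:ℤ)⟧, hYmu, ⟨shiftNegShift Y 1⟩⟩, hT⟩,
        (hNsub hN0).2⟩
  refine ⟨⟨fun A B e hA => hIso e hA, fun A B h1 h2 => hBiprod h1 h2,
    fun A B hAB => ⟨hKey hAB, hKey (hIso (biprod.braiding A B) hAB)⟩⟩, hB2, ?_, hB4⟩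
  intro X hX
  obtain ⟨D0, b0, hD0, happ0⟩ := lap hX
  exact ⟨⟨D0, hD0, b0, fun D' hD' g => happ0 D' hD' g⟩, hX.2⟩

end IYMainB

/-- Iyama–Yoshino: for a rigid subcategory `𝒟`, `ℳ ↦ μ⁻¹(ℳ;𝒟)` is a
bijection between subcategories `ℳ` with `𝒟 ⊆ ℳ ⊆ 𝒟̌ ∩ (𝒟[-1])⊥` and subcategories
`𝒩` with `𝒟 ⊆ 𝒩 ⊆ 𝒟̂ ∩ ⊥(𝒟[1])`, with inverse `𝒩 ↦ μ(𝒩;𝒟)`. -/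
theorem stmt5 (𝒟 : Set C) (hD : IsSubcat 𝒟)
    (hrigid : homZero 𝒟 (shiftSet 𝒟 (1:ℤ))) :
    (∀ ℳ : Set C, IsSubcat ℳ → 𝒟 ⊆ ℳ →
      ℳ ⊆ {A : C | HasLeftApprox 𝒟 A} ∩ shiftRightPerp 𝒟 →
        IsSubcat (muInv ℳ 𝒟) ∧ 𝒟 ⊆ muInv ℳ 𝒟 ∧
        muInv ℳ 𝒟 ⊆ {A : C | HasRightApprox 𝒟 A} ∩ leftPerpShift 𝒟 ∧
        mu (muInv ℳ 𝒟) 𝒟 = ℳ) ∧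
    (∀ 𝒩 : Set C, IsSubcat 𝒩 → 𝒟 ⊆ 𝒩 →
      𝒩 ⊆ {A : C | HasRightApprox 𝒟 A} ∩ leftPerpShift 𝒟 →
        IsSubcat (mu 𝒩 𝒟) ∧ 𝒟 ⊆ mu 𝒩 𝒟 ∧
        mu 𝒩 𝒟 ⊆ {A : C | HasLeftApprox 𝒟 A} ∩ shiftRightPerp 𝒟 ∧
        muInv (mu 𝒩 𝒟) 𝒟 = 𝒩) :=
  ⟨fun ℳ hM hDM hMsub => IY_sideA 𝒟 hD hrigid ℳ hM hDM hMsub,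
   fun 𝒩 hN hDN hNsub => IY_sideB 𝒟 hD hrigid 𝒩 hN hDN hNsub⟩
end

section
/- Let C be a triangulated category, D a subcategory, and X an object of C with Hom(X,D'[1])=0 for all D' in D. Suppose W → D_W →(g)→ Z → W[1] is a distinguished triangle in C with D_W in D and g a right D-approximation of Z. Then Hom_C(X,W[1])=0 if and only if every morphism X → Z factors through an object of D. -/
open CategoryTheory CategoryTheory.Limits CategoryTheory.Pretriangulated

variable {C : Type*} [Category C] [Preadditive C] [HasZeroObject C]
  [HasShift C ℤ] [∀ n : ℤ, (shiftFunctor C n).Additive] [Pretriangulated C]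

/-- Lemma 3.4: given `X` with `Hom(X,𝒟[1]) = 0` and a triangle
`W → D_W → Z → W[1]` with `D_W ∈ 𝒟` and `D_W → Z` a right `𝒟`-approximation,
`Hom(X,W[1]) = 0` iff every morphism `X → Z` factors through an object of `𝒟`. -/
theorem stmt7 (𝒟 : Set C) (hD : IsSubcat 𝒟) (X W DW Z : C)
    (hX : ∀ D' ∈ 𝒟, ∀ f : X ⟶ (D'⟦(1:ℤ)⟧), f = 0)
    (f : W ⟶ DW) (g : DW ⟶ Z) (h : Z ⟶ (W⟦(1:ℤ)⟧))
    (hDW : DW ∈ 𝒟)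
    (htri : Triangle.mk f g h ∈ distTriang C)
    (happrox : ∀ D' ∈ 𝒟, ∀ u : D' ⟶ Z, ∃ v : D' ⟶ DW, v ≫ g = u) :
    (∀ φ : X ⟶ (W⟦(1:ℤ)⟧), φ = 0) ↔
      (∀ φ : X ⟶ Z, ∃ (D' : C) (_ : D' ∈ 𝒟) (u : X ⟶ D') (v : D' ⟶ Z), u ≫ v = φ) := by
  constructor
  · intro hz φ
    obtain ⟨u, hu⟩ := Triangle.coyoneda_exact₃ _ htri φ (hz _)
    exact ⟨DW, hDW, u, g, hu.symm⟩
  · intro hfac φ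
    obtain ⟨ψ, hψ⟩ := Triangle.coyoneda_exact₁ _ htri φ (hX DW hDW _)
    obtain ⟨D', hD', u, v, huv⟩ := hfac ψ
    obtain ⟨w, hw⟩ := happrox D' hD' v
    rw [hψ, ← huv, ← hw]
    change (u ≫ w ≫ g) ≫ h = 0
    simp only [Category.assoc]
    have h0 := comp_distTriang_mor_zero₂₃ _ htri
    change g ≫ h = 0 at h0
    rw [h0, comp_zero, comp_zero]
end

section
/- Let C be a Hom-finite, Krull–Schmidt, k-linear triangulated category, (X,W) a cotorsion pair in C with core I = X ∩ W, and D ⊆ I a subcategory satisfying condition (RF). Then the core of the cotorsion pair (μ⁻¹(X;D), μ⁻¹(W;D)) equals μ⁻¹(I;D), and (I, μ⁻¹(I;D)) is a D-mutation pair. -/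
open CategoryTheory CategoryTheory.Limits CategoryTheory.Pretriangulated

variable {C : Type*} [Category C] [Preadditive C] [HasZeroObject C]
  [HasShift C ℤ] [∀ n : ℤ, (shiftFunctor C n).Additive] [Pretriangulated C]

section Helpers
set_option linter.unusedSectionVars false


lemma myHomShiftZero {D M : C} (hz : ∀ f : (D⟦(-1:ℤ)⟧) ⟶ M, f = 0) (g : D ⟶ M⟦(1:ℤ)⟧) : g = 0 := by
  have h1 : (shiftFunctor C (-1:ℤ)).map g ≫ ((shiftFunctorCompIsoId C (1:ℤ) (-1:ℤ) (by norm_num)).hom.app M) = 0 := hz _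
  have h2 : (shiftFunctor C (-1:ℤ)).map g = 0 := by
    calc (shiftFunctor C (-1:ℤ)).map g
        = ((shiftFunctor C (-1:ℤ)).map g ≫ ((shiftFunctorCompIsoId C (1:ℤ) (-1:ℤ) (by norm_num)).hom.app M)) ≫ ((shiftFunctorCompIsoId C (1:ℤ) (-1:ℤ) (by norm_num)).inv.app M) := by simp
      _ = 0 := by rw [h1, Limits.zero_comp]
  apply (shiftFunctor C (-1:ℤ)).map_injective
  simpa using h2

lemma myUnshiftIso {X Y : C} (e : X⟦(1:ℤ)⟧ ≅ Y⟦(1:ℤ)⟧) : Nonempty (X ≅ Y) :=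
  ⟨(shiftFunctor C (1:ℤ)).preimageIso e⟩

lemma myDistIso₁ {A B Z Y : C} {a : A ⟶ B} {f : B ⟶ Z} {h : Z ⟶ A⟦(1:ℤ)⟧}
    (hT : Triangle.mk a f h ∈ distTriang C) (e : Y ≅ A) :
    Triangle.mk (e.hom ≫ a) f (h ≫ (e.inv)⟦(1:ℤ)⟧') ∈ distTriang C := by
  refine isomorphic_distinguished _ hT _ (Triangle.isoMk _ _ e (Iso.refl _) (Iso.refl _) (by simp [Triangle.mk]) (by simp [Triangle.mk]) ?_)
  dsimp [Triangle.mk]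
  rw [Category.assoc, ← Functor.map_comp, Iso.inv_hom_id]; simp

lemma myDistIso₃ {A B Z Y : C} {a : A ⟶ B} {f : B ⟶ Z} {h : Z ⟶ A⟦(1:ℤ)⟧}
    (hT : Triangle.mk a f h ∈ distTriang C) (e : Z ≅ Y) :
    Triangle.mk a (f ≫ e.hom) (e.inv ≫ h) ∈ distTriang C := by
  refine isomorphic_distinguished _ hT _ (Triangle.isoMk _ _ (Iso.refl _) (Iso.refl _) e.symm (by simp [Triangle.mk]) (by simp [Triangle.mk]) (by simp [Triangle.mk]))

/-- Shear isomorphism on a biproduct. -/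
noncomputable def myShear {X Y : C} (g : Y ⟶ X) : X ⊞ Y ≅ X ⊞ Y where
  hom := biprod.desc biprod.inl (biprod.lift g (𝟙 Y))
  inv := biprod.desc biprod.inl (biprod.lift (-g) (𝟙 Y))
  hom_inv_id := by ext <;> simp
  inv_hom_id := by ext <;> simp

lemma myShear_prop {X Y Z : C} (g : Y ⟶ X) (f : X ⟶ Z) :
    (myShear g).hom ≫ (biprod.fst ≫ f) = biprod.desc f (g ≫ f) := by
  ext <;> simp [myShear]

lemma myBraid_prop {X Y Z : C} (f : X ⟶ Z) (f' : Y ⟶ Z) :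
    (biprod.braiding X Y).hom ≫ biprod.desc f' f = biprod.desc f f' := by
  ext <;> simp

/-- uniqueness of cocone up to iso -/
lemma myIsoCocone {T T' : Triangle C} (hT : T ∈ distTriang C) (hT' : T' ∈ distTriang C)
    (e₂ : T.obj₂ ≅ T'.obj₂) (e₃ : T.obj₃ ≅ T'.obj₃)
    (comm : T.mor₂ ≫ e₃.hom = e₂.hom ≫ T'.mor₂) : Nonempty (T.obj₁ ≅ T'.obj₁) := by
  have hR := rot_of_distTriang _ hT
  have hR' := rot_of_distTriang _ hT'
  let φ := completeDistinguishedTriangleMorphism T.rotate T'.rotate hR hR' e₂.hom e₃.hom comm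
  haveI : IsIso φ.hom₁ := by
    have : φ.hom₁ = e₂.hom := rfl
    rw [this]; exact (inferInstance : IsIso e₂.hom)
  haveI : IsIso φ.hom₂ := by
    have : φ.hom₂ = e₃.hom := rfl
    rw [this]; exact (inferInstance : IsIso e₃.hom)
  haveI h3 := isIso₃_of_isIso₁₂ φ hR hR' inferInstance inferInstance
  exact myUnshiftIso (@asIso _ _ _ _ φ.hom₃ h3)

lemma myCoconeBiprod {A B Z : C} (B' : C) {a : A ⟶ B} {f : B ⟶ Z} {h : Z ⟶ A⟦(1:ℤ)⟧}
    (hT : Triangle.mk a f h ∈ distTriang C) :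
    ∃ (m : A ⊞ B' ⟶ B ⊞ B') (h' : Z ⟶ (A ⊞ B')⟦(1:ℤ)⟧),
      Triangle.mk m (biprod.fst ≫ f) h' ∈ distTriang C := by
  obtain ⟨Q, q, r, hS⟩ := distinguished_cocone_triangle (biprod.map a (𝟙 B'))
  have hT2 : contractibleTriangle B' ∈ distTriang C := contractible_distinguished B'
  let φ1 := completeDistinguishedTriangleMorphism (Triangle.mk a f h)
    (Triangle.mk (biprod.map a (𝟙 B')) q r) hT hS biprod.inl biprod.inl (by simp [Triangle.mk])
  let φ2 := completeDistinguishedTriangleMorphism (contractibleTriangle B')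
    (Triangle.mk (biprod.map a (𝟙 B')) q r) hT2 hS biprod.inr biprod.inr (by simp [contractibleTriangle, Triangle.mk])
  let ψ1 := completeDistinguishedTriangleMorphism (Triangle.mk (biprod.map a (𝟙 B')) q r)
    (Triangle.mk a f h) hS hT biprod.fst biprod.fst (by simp [Triangle.mk])
  let ψ2 := completeDistinguishedTriangleMorphism (Triangle.mk (biprod.map a (𝟙 B')) q r)
    (contractibleTriangle B') hS hT2 biprod.snd biprod.snd (by simp [contractibleTriangle, Triangle.mk])
  set θ : Z ⟶ Q := φ1.hom₃ with hθ
  set η : Q ⟶ Z := ψ1.hom₃ with hη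
  have c1 : f ≫ θ = (biprod.inl : B ⟶ B ⊞ B') ≫ q := φ1.comm₂
  have c2 : h ≫ (biprod.inl : A ⟶ A ⊞ B')⟦(1:ℤ)⟧' = θ ≫ r := φ1.comm₃
  have c3 : q ≫ η = (biprod.fst : B ⊞ B' ⟶ B) ≫ f := ψ1.comm₂
  have c4 : r ≫ (biprod.fst : A ⊞ B' ⟶ A)⟦(1:ℤ)⟧' = η ≫ h := ψ1.comm₃
  have c5 : (biprod.inr : B' ⟶ B ⊞ B') ≫ q = 0 := by
    have := φ2.comm₂
    simp [contractibleTriangle, φ2, Triangle.mk] at this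
    exact this.symm
  have c6 : r ≫ (biprod.snd : A ⊞ B' ⟶ B')⟦(1:ℤ)⟧' = 0 := by
    have := ψ2.comm₃
    simpa [contractibleTriangle, ψ2, Triangle.mk, completeDistinguishedTriangleMorphism] using this
  have hq : (biprod.fst : B ⊞ B' ⟶ B) ≫ (biprod.inl : B ⟶ B ⊞ B') ≫ q = q := by
    conv_rhs => rw [← Category.id_comp q, ← biprod.total]
    rw [Preadditive.add_comp, Category.assoc, Category.assoc, c5, Limits.comp_zero, add_zero]
  have key1 : q ≫ η ≫ θ = q := by
    rw [← Category.assoc, c3, Category.assoc, c1, hq]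
  have key2 : η ≫ θ ≫ r = r := by
    have this0 : r ≫ ((biprod.snd : A ⊞ B' ⟶ B') ≫ (biprod.inr : B' ⟶ A ⊞ B'))⟦(1:ℤ)⟧' = 0 := by
      rw [Functor.map_comp, ← Category.assoc, c6, Limits.zero_comp]
    calc η ≫ θ ≫ r = η ≫ h ≫ (biprod.inl : A ⟶ A ⊞ B')⟦(1:ℤ)⟧' := by rw [c2]
      _ = (r ≫ (biprod.fst : A ⊞ B' ⟶ A)⟦(1:ℤ)⟧') ≫ (biprod.inl : A ⟶ A ⊞ B')⟦(1:ℤ)⟧' := by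
          rw [c4, Category.assoc]
      _ = r ≫ ((biprod.fst : A ⊞ B' ⟶ A) ≫ (biprod.inl : A ⟶ A ⊞ B'))⟦(1:ℤ)⟧' := by
          rw [Category.assoc, ← Functor.map_comp]
      _ = r ≫ ((biprod.fst : A ⊞ B' ⟶ A) ≫ (biprod.inl : A ⟶ A ⊞ B'))⟦(1:ℤ)⟧'
            + r ≫ ((biprod.snd : A ⊞ B' ⟶ B') ≫ (biprod.inr : B' ⟶ A ⊞ B'))⟦(1:ℤ)⟧' := by rw [this0, add_zero]
      _ = r ≫ (𝟙 (A ⊞ B'))⟦(1:ℤ)⟧' := by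
          rw [← Preadditive.comp_add, ← Functor.map_add, biprod.total]
      _ = r := by simp
  -- θ ≫ η is iso
  have hχ : IsIso (θ ≫ η) := by
    let χ : Triangle.mk a f h ⟶ Triangle.mk a f h :=
      { hom₁ := 𝟙 A
        hom₂ := 𝟙 B
        hom₃ := θ ≫ η
        comm₁ := by simp [Triangle.mk]
        comm₂ := by
          dsimp [Triangle.mk]
          rw [Category.id_comp, ← Category.assoc, c1, Category.assoc, c3, ← Category.assoc]
          simp
        comm₃ := by
          dsimp [Triangle.mk]
          rw [Category.assoc, ← c4, ← Category.assoc, ← c2, Category.assoc, ← Functor.map_comp]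
          simp }
    exact isIso₃_of_isIso₁₂ χ hT hT (by dsimp [χ, Triangle.mk]; infer_instance) (by dsimp [χ, Triangle.mk]; infer_instance)
  have hΨ : IsIso (η ≫ θ) := by
    let Ψ : Triangle.mk (biprod.map a (𝟙 B')) q r ⟶ Triangle.mk (biprod.map a (𝟙 B')) q r :=
      { hom₁ := 𝟙 _
        hom₂ := 𝟙 _
        hom₃ := η ≫ θ
        comm₁ := by simp [Triangle.mk]
        comm₂ := by dsimp [Triangle.mk]; rw [Category.id_comp, key1]
        comm₃ := by
          dsimp [Triangle.mk]
          simp only [CategoryTheory.Functor.map_id, Category.comp_id, Category.assoc]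
          exact key2.symm }
    exact isIso₃_of_isIso₁₂ Ψ hS hS (by dsimp [Ψ, Triangle.mk]; infer_instance) (by dsimp [Ψ, Triangle.mk]; infer_instance)
  have hθiso : IsIso θ := by
    refine ⟨η ≫ inv (θ ≫ η), ?_, ?_⟩
    · rw [← Category.assoc, IsIso.hom_inv_id]
    · have : (η ≫ θ) ≫ ((η ≫ inv (θ ≫ η)) ≫ θ) = (η ≫ θ) ≫ 𝟙 _ := by
        rw [Category.comp_id]
        rw [Category.assoc, ← Category.assoc θ, ← Category.assoc θ, IsIso.hom_inv_id]
        simp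
      exact (cancel_epi (η ≫ θ)).1 this
  refine ⟨biprod.map a (𝟙 B'), θ ≫ r, ?_⟩
  refine isomorphic_distinguished _ hS _
    (Triangle.isoMk _ _ (Iso.refl _) (Iso.refl _) (@asIso _ _ _ _ θ hθiso) (by simp [Triangle.mk]) ?_ ?_)
  · dsimp [Triangle.mk]
    rw [Category.id_comp, Category.assoc, c1, hq]
  · dsimp [Triangle.mk]
    simp

/-- Key lemma: two triangles over `Z` with mutual factorization have biproduct-equivalent cocones. -/
lemma myKeyLemma {A B A' B' Z : C} {a : A ⟶ B} {f : B ⟶ Z} {h : Z ⟶ A⟦(1:ℤ)⟧}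
    {a' : A' ⟶ B'} {f' : B' ⟶ Z} {h' : Z ⟶ A'⟦(1:ℤ)⟧}
    (hT : Triangle.mk a f h ∈ distTriang C) (hT' : Triangle.mk a' f' h' ∈ distTriang C)
    {g : B' ⟶ B} (hg : g ≫ f = f') {g' : B ⟶ B'} (hg' : g' ≫ f' = f) :
    Nonempty (A ⊞ B' ≅ A' ⊞ B) := by
  obtain ⟨m, hh, hU⟩ := myCoconeBiprod B' hT
  obtain ⟨m', hh', hU'⟩ := myCoconeBiprod B hT'
  refine myIsoCocone hU hU' ((myShear g).symm ≪≫ biprod.braiding B B' ≪≫ myShear g') (Iso.refl Z) ?_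
  dsimp [Triangle.mk]
  rw [Category.comp_id]
  ext
  · simp [myShear, hg']
  · simp [myShear, hg, hg']

end Helpers

section Helpers2
set_option linter.unusedSectionVars false
variable {𝒳 𝒲 𝒟 : Set C}

lemma myShiftNegMem (hX : IsSubcat 𝒳) {Xs : C} (hXs : Xs ∈ shiftSet 𝒳 (1:ℤ)) :
    (Xs⟦(-1:ℤ)⟧) ∈ 𝒳 := by
  obtain ⟨X0, hX0, ⟨u⟩⟩ := hXs
  exact hX.mem_of_iso (((shiftFunctorCompIsoId C (1:ℤ) (-1:ℤ) (by norm_num)).app X0).symm ≪≫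
    (shiftFunctor C (-1:ℤ)).mapIso u) hX0

noncomputable def myShiftShiftIso (W0 : C) : (W0⟦(-1:ℤ)⟧)⟦(1:ℤ)⟧ ≅ W0 :=
  (shiftFunctorCompIsoId C (-1:ℤ) (1:ℤ) (by norm_num)).app W0

lemma myLift {A B Z D' : C} {a : A ⟶ B} {f : B ⟶ Z} {h : Z ⟶ A⟦(1:ℤ)⟧}
    (hT : Triangle.mk a f h ∈ distTriang C)
    (hvan : ∀ u : D' ⟶ A⟦(1:ℤ)⟧, u = 0) (u : D' ⟶ Z) : ∃ v : D' ⟶ B, v ≫ f = u := by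
  obtain ⟨v, hv⟩ := Triangle.coyoneda_exact₃ _ hT u (hvan _)
  exact ⟨v, hv.symm⟩

lemma myTransfer {𝒮 : Set C} (h𝒮 : IsSubcat 𝒮)
    {A B A2 B2 Z : C} {a : A ⟶ B} {f : B ⟶ Z} {h : Z ⟶ A⟦(1:ℤ)⟧}
    {a2 : A2 ⟶ B2} {f2 : B2 ⟶ Z} {h2 : Z ⟶ A2⟦(1:ℤ)⟧}
    (hT1 : Triangle.mk a f h ∈ distTriang C) (hT2 : Triangle.mk a2 f2 h2 ∈ distTriang C)
    (hA : A ∈ 𝒮) (hB : B ∈ 𝒮) (hB2 : B2 ∈ 𝒮)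
    (hg : ∃ g : B2 ⟶ B, g ≫ f = f2) (hg' : ∃ g' : B ⟶ B2, g' ≫ f2 = f) : A2 ∈ 𝒮 := by
  obtain ⟨g, hgg⟩ := hg
  obtain ⟨g', hgg'⟩ := hg'
  obtain ⟨e⟩ := myKeyLemma hT1 hT2 hgg hgg'
  exact (h𝒮.mem_of_biprod (h𝒮.mem_of_iso e (h𝒮.biprod_mem hA hB2))).1

lemma myVanishW (hpair : IsCotorsionPair 𝒳 𝒲) (hDI : 𝒟 ⊆ 𝒳 ∩ 𝒲) :
    ∀ Y ∈ 𝒲, ∀ D' ∈ 𝒟, ∀ u : D' ⟶ Y⟦(1:ℤ)⟧, u = 0 :=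
  fun Y hY D' hD' u => hpair.1 (hDI hD').1 ⟨Y, hY, ⟨Iso.refl _⟩⟩ u

lemma myMemLeftPerp (hpair : IsCotorsionPair 𝒳 𝒲) (hDI : 𝒟 ⊆ 𝒳 ∩ 𝒲)
    {X : C} (hX : X ∈ 𝒳) : X ∈ leftPerpShift 𝒟 :=
  fun D hD f => hpair.1 hX ⟨D, (hDI hD).2, ⟨Iso.refl _⟩⟩ f

lemma myVanishX (hpair : IsCotorsionPair 𝒳 𝒲) (hDI : 𝒟 ⊆ 𝒳 ∩ 𝒲) (hRF : RF 𝒟) :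
    ∀ Y ∈ 𝒳, ∀ D' ∈ 𝒟, ∀ u : D' ⟶ Y⟦(1:ℤ)⟧, u = 0 := by
  intro Y hY D' hD' u
  have h1 : Y ∈ leftPerpShift 𝒟 := myMemLeftPerp hpair hDI hY
  have h2 : Y ∈ shiftRightPerp 𝒟 := by rw [← hRF.2.2.2]; exact h1
  exact myHomShiftZero (fun f => h2 D' hD' f) u

lemma mySideMem {𝒮 : Set C} (h𝒮 : IsSubcat 𝒮) (hD𝒮 : 𝒟 ⊆ 𝒮)
    (hperp : ∀ Y ∈ 𝒮, ∀ D' ∈ 𝒟, ∀ u : D' ⟶ Y⟦(1:ℤ)⟧, u = 0)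
    {Z M D₀ : C} (hD₀ : D₀ ∈ 𝒟) {m1 : M ⟶ D₀} {p : D₀ ⟶ Z} {m3 : Z ⟶ M⟦(1:ℤ)⟧}
    (hTM : Triangle.mk m1 p m3 ∈ distTriang C)
    (hp : ∀ D' ∈ 𝒟, ∀ g : D' ⟶ Z, ∃ v : D' ⟶ D₀, v ≫ p = g)
    (hZ : Z ∈ extClass 𝒟 (shiftSet 𝒮 (1:ℤ))) : M ∈ 𝒮 := by
  obtain ⟨D₁, Xs, p1, q1, r1, hD₁, hXs, hT⟩ := hZ
  have hTX : Triangle.mk ((Triangle.mk p1 q1 r1).invRotate.mor₁) p1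
      ((Triangle.mk p1 q1 r1).invRotate.mor₃) ∈ distTriang C :=
    inv_rot_of_distTriang _ hT
  have hAX : (Xs⟦(-1:ℤ)⟧) ∈ 𝒮 := myShiftNegMem h𝒮 hXs
  refine myTransfer h𝒮 hTX hTM hAX (hD𝒮 hD₁) (hD𝒮 hD₀) ?_ ?_
  · exact myLift hTX (hperp _ hAX D₀ hD₀) p
  · exact hp D₁ hD₁ p1

end Helpers2

/-- the core of the mutated cotorsion pair `(μ⁻¹(𝒳;𝒟), μ⁻¹(𝒲;𝒟))`
equals `μ⁻¹(I;𝒟)`, and `(I, μ⁻¹(I;𝒟))` is a `𝒟`-mutation pair, where `I = 𝒳 ∩ 𝒲`. -/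
theorem stmt9 (k : Type*) [Field k] [Linear k C]
    [∀ A B : C, Module.Finite k (A ⟶ B)] [IsIdempotentComplete C]
    (𝒳 𝒲 𝒟 : Set C) (hX : IsSubcat 𝒳) (hW : IsSubcat 𝒲) (hD : IsSubcat 𝒟)
    (hpair : IsCotorsionPair 𝒳 𝒲)
    (hDI : 𝒟 ⊆ 𝒳 ∩ 𝒲)
    (hRF : RF 𝒟) :
    muInv 𝒳 𝒟 ∩ muInv 𝒲 𝒟 = muInv (𝒳 ∩ 𝒲) 𝒟 ∧
    IsMutationPair (𝒳 ∩ 𝒲) (muInv (𝒳 ∩ 𝒲) 𝒟) 𝒟 := by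
  have vanX := myVanishX hpair hDI hRF
  have vanW := myVanishW hpair hDI
  have hDX : 𝒟 ⊆ 𝒳 := fun D hD => (hDI hD).1
  have hDW : 𝒟 ⊆ 𝒲 := fun D hD => (hDI hD).2
  constructor
  · -- part 1
    apply Set.Subset.antisymm
    · rintro Z ⟨⟨hZX, hZperp⟩, hZW, -⟩
      obtain ⟨D₀, hD₀, p, hp⟩ := hRF.2.1 Z
      obtain ⟨Q, q, r, hTQ⟩ := distinguished_cocone_triangle p
      have hTM : Triangle.mk ((Triangle.mk p q r).invRotate.mor₁) p
          ((Triangle.mk p q r).invRotate.mor₃) ∈ distTriang C := inv_rot_of_distTriang _ hTQ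
      have hMX : (Q⟦(-1:ℤ)⟧) ∈ 𝒳 := mySideMem hX hDX vanX hD₀ hTM hp hZX
      have hMW : (Q⟦(-1:ℤ)⟧) ∈ 𝒲 := mySideMem hW hDW vanW hD₀ hTM hp hZW
      exact ⟨⟨D₀, Q, p, q, r, hD₀, ⟨Q⟦(-1:ℤ)⟧, ⟨hMX, hMW⟩, ⟨myShiftShiftIso Q⟩⟩, hTQ⟩, hZperp⟩
    · rintro Z ⟨⟨D₁, Bs, f, g, h, hD₁, ⟨I0, hI0, ⟨u⟩⟩, hT⟩, hZperp⟩
      exact ⟨⟨⟨D₁, Bs, f, g, h, hD₁, ⟨I0, hI0.1, ⟨u⟩⟩, hT⟩, hZperp⟩,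
        ⟨⟨D₁, Bs, f, g, h, hD₁, ⟨I0, hI0.2, ⟨u⟩⟩, hT⟩, hZperp⟩⟩
  · -- part 2
    constructor
    · apply Set.Subset.antisymm
      · intro M hM
        have hMperpL : M ∈ leftPerpShift 𝒟 := myMemLeftPerp hpair hDI hM.1
        have hMperp : M ∈ shiftRightPerp 𝒟 := by rw [← hRF.2.2.2]; exact hMperpL
        obtain ⟨Df, hDf, fapp, happrox⟩ := hRF.1 M
        obtain ⟨N, g, h, hTN⟩ := distinguished_cocone_triangle fapp
        have hNmem : N ∈ muInv (𝒳 ∩ 𝒲) 𝒟 := by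
          constructor
          · exact ⟨Df, M⟦(1:ℤ)⟧, g, h, -(fapp⟦(1:ℤ)⟧'), hDf, ⟨M, hM, ⟨Iso.refl _⟩⟩,
              rot_of_distTriang _ hTN⟩
          · intro D'' hD'' φ
            have hgφ : g ≫ φ = 0 := hRF.2.2.1 hDf ⟨D'', hD'', ⟨Iso.refl _⟩⟩ (g ≫ φ)
            obtain ⟨ψ, hψ⟩ := Triangle.yoneda_exact₃ _ hTN φ hgφ
            have hψ' : φ = h ≫ ψ := hψ
            have hχeq : ((shiftFunctor C (1:ℤ)).preimage ψ)⟦(1:ℤ)⟧' = ψ :=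
              (shiftFunctor C (1:ℤ)).map_preimage ψ
            obtain ⟨θ, hθ⟩ := happrox D'' hD'' ((shiftFunctor C (1:ℤ)).preimage ψ)
            have hzero : h ≫ fapp⟦(1:ℤ)⟧' = 0 := comp_distTriang_mor_zero₃₁ _ hTN
            rw [hψ', ← hχeq]; erw [← hθ, Functor.map_comp, ← Category.assoc, hzero,
              Limits.zero_comp]
        exact ⟨⟨N⟦(-1:ℤ)⟧, Df, (Triangle.mk fapp g h).invRotate.mor₁, fapp,
          (Triangle.mk fapp g h).invRotate.mor₃, ⟨N, hNmem, ⟨Iso.refl _⟩⟩, hDf,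
          inv_rot_of_distTriang _ hTN⟩, hMperp⟩
      · rintro M ⟨⟨A, Dm, am, bm, cm, ⟨N, hN, ⟨w⟩⟩, hDm, hTa⟩, hMperp⟩
        obtain ⟨⟨D₂, Bs, p2, q2, r2, hD₂, ⟨I0, hI0, ⟨u⟩⟩, hTc⟩, hNperpL⟩ := hN
        have e : A⟦(1:ℤ)⟧ ≅ N := ((shiftFunctor C (1:ℤ)).mapIso w).symm ≪≫ myShiftShiftIso N
        have hrot : Triangle.mk bm cm (-(am⟦(1:ℤ)⟧')) ∈ distTriang C := rot_of_distTriang _ hTa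
        have hV1 : Triangle.mk bm (cm ≫ e.hom) (e.inv ≫ (-(am⟦(1:ℤ)⟧'))) ∈ distTriang C :=
          myDistIso₃ hrot e
        have hV2 : Triangle.mk ((Triangle.mk p2 q2 r2).invRotate.mor₁) p2
            ((Triangle.mk p2 q2 r2).invRotate.mor₃) ∈ distTriang C := inv_rot_of_distTriang _ hTc
        have hA2 : (Bs⟦(-1:ℤ)⟧) ∈ 𝒳 ∩ 𝒲 :=
          ⟨myShiftNegMem hX ⟨I0, hI0.1, ⟨u⟩⟩, myShiftNegMem hW ⟨I0, hI0.2, ⟨u⟩⟩⟩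
        have lift1 : ∃ v : D₂ ⟶ Dm, v ≫ (cm ≫ e.hom) = p2 :=
          myLift hV1 (fun u' => myHomShiftZero (fun f0 => hMperp D₂ hD₂ f0) u') p2
        have lift2 : ∃ v : Dm ⟶ D₂, v ≫ p2 = cm ≫ e.hom :=
          myLift hV2 (vanW _ hA2.2 Dm hDm) (cm ≫ e.hom)
        exact ⟨myTransfer hX hV2 hV1 hA2.1 (hDX hD₂) (hDX hDm) lift2 lift1,
          myTransfer hW hV2 hV1 hA2.2 (hDW hD₂) (hDW hDm) lift2 lift1⟩
    · rfl
end

section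
/- Let C be a Hom-finite, Krull–Schmidt, k-linear triangulated category, (X,Y) a t-structure in C, and D a subcategory satisfying condition (RF) with D ⊆ X ⊆ (D[-1])⊥. Then D consists only of zero objects, and the D-mutation (μ⁻¹(X;D), μ⁻¹(Y;D[1])) equals (X[1], Y[1]); in particular it is again a t-structure. Thus the only possible mutation of a t-structure is its shift. -/
open CategoryTheory CategoryTheory.Limits CategoryTheory.Pretriangulated

variable {C : Type*} [Category C] [Preadditive C] [HasZeroObject C]
  [HasShift C ℤ] [∀ n : ℤ, (shiftFunctor C n).Additive] [Pretriangulated C]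

set_option linter.unusedSectionVars false

private lemma isZero_shift_obj' {D : C} (h : IsZero D) (n : ℤ) : IsZero (D⟦n⟧) :=
  IsZero.of_iso (isZero_zero C)
    (((shiftFunctor C n).mapIso h.isoZero).trans ((shiftFunctor C n).mapZeroObject))

private lemma isZero_of_shift' {D : C} (h : IsZero ((D)⟦(1:ℤ)⟧)) : IsZero D := by
  rw [IsZero.iff_id_eq_zero]
  rw [← (shiftFunctor C (1:ℤ)).map_eq_zero_iff, CategoryTheory.Functor.map_id]
  exact h.eq_of_src _ _

private lemma muInv_of_zero' (ℳ 𝒟 : Set C) (hz : ∀ D ∈ 𝒟, IsZero D) (D0 : C) (hD0 : D0 ∈ 𝒟) :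
    muInv ℳ 𝒟 = shiftSet ℳ (1:ℤ) := by
  ext Z
  constructor
  · rintro ⟨⟨A, B, f, g, h, hA, hB, hdist⟩, -⟩
    have : IsIso g := (Triangle.isZero₁_iff_isIso₂ _ hdist).1 (hz A hA)
    obtain ⟨M, hM, ⟨e⟩⟩ := hB
    exact ⟨M, hM, ⟨e.trans (asIso g).symm⟩⟩
  · intro hZ
    refine ⟨⟨D0, Z, 0, 𝟙 Z, 0, hD0, hZ, ?_⟩, ?_⟩
    · refine isomorphic_distinguished _ (contractible_distinguished₁ Z) _ ?_
      refine Triangle.isoMk _ _ ((hz D0 hD0).isoZero) (Iso.refl _) (Iso.refl _)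
        ?_ ?_ ?_
      · exact zero_comp.trans comp_zero.symm
      · exact (Category.comp_id _).trans (Category.id_comp _).symm
      · exact zero_comp.trans comp_zero.symm
    · intro D hD f
      exact (isZero_shift_obj' (hz D hD) 1).eq_of_tgt f 0

private lemma extClass_shift_mem' {𝒳 𝒴 : Set C} (hpair : IsTorsionPair 𝒳 𝒴) (Z : C) :
    Z ∈ extClass (shiftSet 𝒳 (1:ℤ)) (shiftSet 𝒴 (1:ℤ)) := by
  obtain ⟨A, B, f, g, h, hA, hB, hdist⟩ := hpair.2 (Z⟦(-1:ℤ)⟧)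
  set T₁ := (Triangle.shiftFunctor C 1).obj (Triangle.mk f g h) with hT₁def
  have hT₁ : T₁ ∈ distTriang C := Triangle.shift_distinguished _ hdist 1
  set e : ((Z⟦(-1:ℤ)⟧)⟦(1:ℤ)⟧) ≅ Z := (shiftEquiv C (1:ℤ)).counitIso.app Z with he
  have hT₂ : Triangle.mk (T₁.mor₁ ≫ e.hom) (e.inv ≫ T₁.mor₂) T₁.mor₃ ∈ distTriang C := by
    refine isomorphic_distinguished _ hT₁ _ ?_
    refine Triangle.isoMk _ _ (Iso.refl _) e.symm (Iso.refl _)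
      ?_ ?_ ?_
    · show (T₁.mor₁ ≫ e.hom) ≫ e.symm.hom = 𝟙 _ ≫ T₁.mor₁
      simp only [Iso.symm_hom, Category.id_comp]
      exact (Category.assoc _ _ _).trans ((congrArg _ e.hom_inv_id).trans (Category.comp_id _))
    · show (e.inv ≫ T₁.mor₂) ≫ 𝟙 _ = e.symm.hom ≫ T₁.mor₂
      simp
    · show T₁.mor₃ ≫ (shiftFunctor C 1).map (𝟙 _) = 𝟙 _ ≫ T₁.mor₃
      simp
  exact ⟨A⟦(1:ℤ)⟧, B⟦(1:ℤ)⟧, T₁.mor₁ ≫ e.hom, e.inv ≫ T₁.mor₂, T₁.mor₃,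
    ⟨A, hA, ⟨Iso.refl _⟩⟩, ⟨B, hB, ⟨Iso.refl _⟩⟩, hT₂⟩


/-- if `(𝒳,𝒴)` is a t-structure and `𝒟` satisfies (RF) with
`𝒟 ⊆ 𝒳 ⊆ (𝒟[-1])⊥`, then `𝒟` consists of zero objects and the `𝒟`-mutation of
`(𝒳,𝒴)` is `(𝒳[1],𝒴[1])`, which is again a t-structure. -/
theorem stmt11 (k : Type*) [Field k] [Linear k C]
    [∀ A B : C, Module.Finite k (A ⟶ B)] [IsIdempotentComplete C]
    (𝒳 𝒴 𝒟 : Set C) (hX : IsSubcat 𝒳) (hY : IsSubcat 𝒴) (hD : IsSubcat 𝒟)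
    (hpair : IsTorsionPair 𝒳 𝒴)
    (ht : shiftSet 𝒳 (1:ℤ) ⊆ 𝒳)
    (hRF : RF 𝒟)
    (hDX : 𝒟 ⊆ 𝒳) (hXD : 𝒳 ⊆ shiftRightPerp 𝒟) :
    (∀ Z ∈ 𝒟, IsZero Z) ∧
    muInv 𝒳 𝒟 = shiftSet 𝒳 (1:ℤ) ∧
    muInv 𝒴 (shiftSet 𝒟 (1:ℤ)) = shiftSet 𝒴 (1:ℤ) ∧
    IsTorsionPair (shiftSet 𝒳 (1:ℤ)) (shiftSet 𝒴 (1:ℤ)) ∧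
    shiftSet (shiftSet 𝒳 (1:ℤ)) (1:ℤ) ⊆ shiftSet 𝒳 (1:ℤ) := by
  obtain ⟨hleft, hright, hrigid, hperp⟩ := hRF
  obtain ⟨Z0, hZ0⟩ := Limits.HasZeroObject.zero (C := C)
  obtain ⟨D0, hD0, -⟩ := hleft Z0
  -- every object of 𝒟 is zero
  have hz : ∀ D ∈ 𝒟, IsZero D := by
    intro D hDmem
    have h1 : (D⟦(1:ℤ)⟧) ∈ shiftSet 𝒳 (1:ℤ) := ⟨D, hDX hDmem, ⟨Iso.refl _⟩⟩
    have h2 := hXD (ht h1)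
    rw [← hperp] at h2
    have hid : 𝟙 (D⟦(1:ℤ)⟧) = 0 := h2 D hDmem (𝟙 _)
    exact isZero_of_shift' ((IsZero.iff_id_eq_zero _).2 hid)
  have hz1 : ∀ D ∈ shiftSet 𝒟 (1:ℤ), IsZero D := by
    rintro D ⟨E, hE, ⟨i⟩⟩
    exact (isZero_shift_obj' (hz E hE) 1).of_iso i.symm
  refine ⟨hz, muInv_of_zero' 𝒳 𝒟 hz D0 hD0,
    muInv_of_zero' 𝒴 (shiftSet 𝒟 (1:ℤ)) hz1 (D0⟦(1:ℤ)⟧) ⟨D0, hD0, ⟨Iso.refl _⟩⟩,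
    ⟨?_, extClass_shift_mem' hpair⟩, ?_⟩
  · rintro A' B' ⟨A, hA, ⟨eA⟩⟩ ⟨B, hB, ⟨eB⟩⟩ f
    have hg : (shiftFunctor C (1:ℤ)).map
        ((shiftFunctor C (1:ℤ)).preimage (eA.hom ≫ f ≫ eB.inv)) = eA.hom ≫ f ≫ eB.inv :=
      (shiftFunctor C (1:ℤ)).map_preimage _
    have h0 : (shiftFunctor C (1:ℤ)).preimage (eA.hom ≫ f ≫ eB.inv) = 0 :=
      hpair.1 hA hB _
    rw [h0, Functor.map_zero] at hg
    have : eA.hom ≫ f ≫ eB.inv = 0 := hg.symm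
    calc f = eA.inv ≫ (eA.hom ≫ f ≫ eB.inv) ≫ eB.hom := by simp
    _ = 0 := by rw [this]; simp
  · rintro Z ⟨A, hA, ⟨e⟩⟩
    exact ⟨A, ht hA, ⟨e⟩⟩
end

section
/- Let C be a Hom-finite, Krull–Schmidt, k-linear triangulated category, (X,Y) a rigid torsion pair in C (i.e. a torsion pair with Hom(X,X[1])=0), and D a subcategory satisfying condition (RF) with D ⊆ X ⊆ (D[-1])⊥. Then the D-mutation (μ⁻¹(X;D), μ⁻¹(Y;D[1])) is again a rigid torsion pair. -/
set_option linter.unusedSectionVars false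
set_option maxHeartbeats 1000000


open CategoryTheory CategoryTheory.Limits CategoryTheory.Pretriangulated

variable {C : Type*} [Category C] [Preadditive C] [HasZeroObject C]
  [HasShift C ℤ] [∀ n : ℤ, (shiftFunctor C n).Additive] [Pretriangulated C]

section AuxStmt12

/-- all maps `A ⟶ B` vanish -/
def hzP (A B : C) : Prop := ∀ f : A ⟶ B, f = 0

lemma hzP_shift {A B : C} (n : ℤ) (h : hzP A B) : hzP (A⟦n⟧) (B⟦n⟧) := by
  intro f
  have : f = ((shiftFunctor C n).preimage f)⟦n⟧' := ((shiftFunctor C n).map_preimage f).symm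
  rw [this, h ((shiftFunctor C n).preimage f), Functor.map_zero]

lemma hzP_unshift {A B : C} (n : ℤ) (h : hzP (A⟦n⟧) (B⟦n⟧)) : hzP A B := by
  intro f
  apply (shiftFunctor C n).map_injective
  rw [h (f⟦n⟧'), Functor.map_zero]

lemma hzP_of_iso {A A' B B' : C} (eA : A ≅ A') (eB : B ≅ B') (h : hzP A B) : hzP A' B' := by
  intro f
  have : eA.hom ≫ f ≫ eB.inv = 0 := h _
  have h2 : f = eA.inv ≫ (eA.hom ≫ f ≫ eB.inv) ≫ eB.hom := by simp
  rw [h2, this]; simp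

/-- from `A⟦-1⟧ ⟶ B` produce `A ⟶ B⟦1⟧` -/
noncomputable def lpUp {A B : C} (χ : A⟦(-1:ℤ)⟧ ⟶ B) : A ⟶ B⟦(1:ℤ)⟧ :=
  ((shiftEquiv C (1:ℤ)).counitIso.app A).inv ≫ χ⟦(1:ℤ)⟧'

lemma lpUp_eq_zero_iff {A B : C} (χ : A⟦(-1:ℤ)⟧ ⟶ B) : lpUp χ = 0 ↔ χ = 0 := by
  constructor
  · intro h
    apply (shiftFunctor C (1:ℤ)).map_injective
    have := congrArg (fun t => ((shiftEquiv C (1:ℤ)).counitIso.app A).hom ≫ t) h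
    simp only [lpUp, comp_zero] at this
    erw [Iso.hom_inv_id_assoc] at this
    erw [this, Functor.map_zero]
    rfl
  · intro h; simp only [lpUp, h]; erw [Functor.map_zero, comp_zero]

lemma lpUp_comp_left {A' A B : C} (f : A' ⟶ A) (χ : A⟦(-1:ℤ)⟧ ⟶ B) :
    lpUp (f⟦(-1:ℤ)⟧' ≫ χ) = f ≫ lpUp χ := by
  unfold lpUp
  erw [Functor.map_comp, ← Category.assoc, ← Category.assoc]
  congr 1
  exact ((shiftEquiv C (1:ℤ)).counitIso.inv.naturality f).symm

/-- from `A ⟶ B⟦1⟧` produce `A⟦-1⟧ ⟶ B` -/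
noncomputable def lpDown {A B : C} (f : A ⟶ B⟦(1:ℤ)⟧) : A⟦(-1:ℤ)⟧ ⟶ B :=
  f⟦(-1:ℤ)⟧' ≫ ((shiftEquiv C (1:ℤ)).unitIso.app B).inv

lemma lpDown_eq_zero_iff {A B : C} (f : A ⟶ B⟦(1:ℤ)⟧) : lpDown f = 0 ↔ f = 0 := by
  constructor
  · intro h
    apply (shiftFunctor C (-1:ℤ)).map_injective
    have := congrArg (fun t => t ≫ ((shiftEquiv C (1:ℤ)).unitIso.app B).hom) h
    simp only [lpDown, zero_comp] at this
    erw [Category.assoc, Iso.inv_hom_id, Category.comp_id] at this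
    erw [this, Functor.map_zero]
    rfl
  · intro h; simp only [lpDown, h]; erw [Functor.map_zero, zero_comp]

section Flips

variable {𝒟 : Set C}

/-- If `M ∈ ⊥(𝒟[1])`, then `Hom(𝒟, M[1]) = 0`. -/
lemma flip₁ (hperp : leftPerpShift 𝒟 = shiftRightPerp 𝒟) {M : C}
    (hM : M ∈ leftPerpShift 𝒟) : ∀ D' ∈ 𝒟, hzP D' (M⟦(1:ℤ)⟧) := by
  intro D' hD' f
  rw [← lpDown_eq_zero_iff]
  rw [hperp] at hM
  exact hM D' hD' _

/-- If `Hom(𝒟, N) = 0` then `N ∈ ⊥(𝒟[1][1])`. -/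
lemma flip₂ (hperp : leftPerpShift 𝒟 = shiftRightPerp 𝒟) {N : C}
    (hN : ∀ D' ∈ 𝒟, hzP D' N) :
    N ∈ leftPerpShift (shiftSet 𝒟 (1:ℤ)) := by
  have hstep : N⟦(-1:ℤ)⟧ ∈ leftPerpShift 𝒟 := by
    rw [hperp]
    intro D'' hD'' p
    exact hzP_shift (-1:ℤ) (hN D'' hD'') p
  rintro B ⟨D', hD', ⟨e⟩⟩ f
  have hg : f ≫ (e.inv)⟦(1:ℤ)⟧' = 0 := by
    rw [← lpDown_eq_zero_iff]
    exact hstep D' hD' _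
  calc f = (f ≫ (e.inv)⟦(1:ℤ)⟧') ≫ (e.hom)⟦(1:ℤ)⟧' := by
        rw [Category.assoc, ← Functor.map_comp, e.inv_hom_id]; simp
    _ = 0 := by rw [hg, zero_comp]

/-- If `N ∈ ⊥(𝒟[1][1])` then `Hom(𝒟, N) = 0`. -/
lemma flip₃ (hperp : leftPerpShift 𝒟 = shiftRightPerp 𝒟) {N : C}
    (hN : N ∈ leftPerpShift (shiftSet 𝒟 (1:ℤ))) :
    ∀ D' ∈ 𝒟, hzP D' N := by
  have hstep : N⟦(-1:ℤ)⟧ ∈ leftPerpShift 𝒟 := by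
    intro D' hD' χ
    rw [← lpUp_eq_zero_iff]
    exact hN (D'⟦(1:ℤ)⟧) ⟨D', hD', ⟨Iso.refl _⟩⟩ _
  rw [hperp] at hstep
  intro D' hD' p
  exact hzP_unshift (-1:ℤ) (fun q => hstep D' hD' q) p

end Flips

section Retract

lemma mem_of_retract [IsIdempotentComplete C] {𝒳 : Set C} (h𝒳 : IsSubcat 𝒳)
    {A B : C} (i : A ⟶ B) (r : B ⟶ A) (hir : i ≫ r = 𝟙 A) (hB : B ∈ 𝒳) : A ∈ 𝒳 := by
  have hidem : (𝟙 B - r ≫ i) ≫ (𝟙 B - r ≫ i) = 𝟙 B - r ≫ i := by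
    have h2 : (r ≫ i) ≫ r ≫ i = r ≫ i := by
      rw [Category.assoc, ← Category.assoc i r i, hir, Category.id_comp]
    simp [Preadditive.comp_sub, Preadditive.sub_comp, h2]
  obtain ⟨Y, s, p, hsp, hps⟩ := IsIdempotentComplete.idempotents_split B (𝟙 B - r ≫ i) hidem
  have hip : i ≫ p = 0 := by
    have h3 : i ≫ p ≫ s = 0 := by
      rw [hps, Preadditive.comp_sub, Category.comp_id, ← Category.assoc, hir,
        Category.id_comp, sub_self]
    have := congrArg (fun t => t ≫ p) h3
    simpa [Category.assoc, hsp] using this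
  have hsr : s ≫ r = 0 := by
    have h4 : (s ≫ r) ≫ i = 0 := by
      have h5 : s ≫ (𝟙 B - r ≫ i) = s ≫ p ≫ s := by rw [hps]
      rw [Preadditive.comp_sub, Category.comp_id, ← Category.assoc s p s, hsp,
        Category.id_comp, ← Category.assoc] at h5
      exact sub_eq_self.mp h5
    have h6 := congrArg (fun t => t ≫ r) h4
    simpa [Category.assoc, hir] using h6
  have hiso : A ⊞ Y ≅ B := by
    refine ⟨biprod.desc i s, biprod.lift r p, ?_, ?_⟩
    · apply biprod.hom_ext'
      · apply biprod.hom_ext <;> simp [hir, hip]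
      · apply biprod.hom_ext <;> simp [hsr, hsp]
    · rw [biprod.lift_desc, hps]; abel
  exact (h𝒳.mem_of_biprod (h𝒳.mem_of_iso hiso.symm hB)).1

variable {𝒳 𝒴 : Set C} [IsIdempotentComplete C]

lemma mem_left_of_torsion (h𝒳 : IsSubcat 𝒳) (hpair : IsTorsionPair 𝒳 𝒴)
    {Z : C} (hZ : ∀ B ∈ 𝒴, hzP Z B) : Z ∈ 𝒳 := by
  obtain ⟨A, B, f, g, h, hA, hB, hT⟩ := hpair.2 Z
  obtain ⟨u, hu⟩ := Triangle.coyoneda_exact₂ _ hT (𝟙 Z)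
    (by exact (Category.id_comp _).trans (hZ B hB g))
  exact mem_of_retract h𝒳 u f hu.symm hA

lemma mem_right_of_torsion (h𝒴 : IsSubcat 𝒴) (hpair : IsTorsionPair 𝒳 𝒴)
    {Z : C} (hZ : ∀ A ∈ 𝒳, hzP A Z) : Z ∈ 𝒴 := by
  obtain ⟨A, B, f, g, h, hA, hB, hT⟩ := hpair.2 Z
  obtain ⟨v, hv⟩ := Triangle.yoneda_exact₂ _ hT (𝟙 Z)
    (by exact (Category.comp_id _).trans (hZ A hA f))
  exact mem_of_retract h𝒴 g v hv.symm hB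

end Retract

/-- The cone of a left `𝒟`-approximation is in `⊥(𝒟[1])`. -/
lemma cone_approx_lps {𝒟 : Set C} (hDrig : homZero 𝒟 (shiftSet 𝒟 (1:ℤ)))
    {X₁ D₀ M₀ : C} (hD₀ : D₀ ∈ 𝒟) {α : X₁ ⟶ D₀} {β : D₀ ⟶ M₀} {θ : M₀ ⟶ X₁⟦(1:ℤ)⟧}
    (happ : ∀ D' ∈ 𝒟, ∀ g : X₁ ⟶ D', ∃ h : D₀ ⟶ D', α ≫ h = g)
    (hT : Triangle.mk α β θ ∈ distTriang C) : M₀ ∈ leftPerpShift 𝒟 := by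
  intro D' hD' φ
  have hβφ : β ≫ φ = 0 := hDrig hD₀ ⟨D', hD', ⟨Iso.refl _⟩⟩ _
  obtain ⟨ψ₁, hψ₁⟩ := Triangle.yoneda_exact₃ _ hT φ hβφ
  obtain ⟨ρ, hρ⟩ := happ D' hD' ((shiftFunctor C (1:ℤ)).preimage ψ₁)
  have hθα : θ ≫ α⟦(1:ℤ)⟧' = 0 := by
    have := comp_distTriang_mor_zero₂₃ _ (rot_of_distTriang _ hT)
    change θ ≫ (-(α⟦(1:ℤ)⟧')) = 0 at this
    rw [Preadditive.comp_neg, neg_eq_zero] at this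
    exact this
  have hψ₁' : ψ₁ = (α ≫ ρ)⟦(1:ℤ)⟧' := by
    erw [hρ, Functor.map_preimage]
  rw [hψ₁, hψ₁']; erw [Functor.map_comp, ← Category.assoc]
  dsimp only [Triangle.mk] at hθα ⊢
  rw [hθα, zero_comp]

section PartsAC

variable {𝒳 𝒴 𝒟 : Set C}

/-- Part (a): Hom vanishing between the mutated classes. -/
lemma part_a (hpair₁ : homZero 𝒳 𝒴) (hperp : leftPerpShift 𝒟 = shiftRightPerp 𝒟) :
    homZero (muInv 𝒳 𝒟) (muInv 𝒴 (shiftSet 𝒟 (1:ℤ))) := by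
  rintro M N' ⟨⟨AM, BM, aM, bM, cM, hAM, hBM, hTM⟩, hMl⟩
    ⟨⟨AN, BN, aN, bN, cN, hAN, hBN, hTN⟩, hNl⟩ f
  have hz1 : hzP AM N' := flip₃ hperp hNl AM hAM
  obtain ⟨g₁, hg₁⟩ := Triangle.yoneda_exact₂ _ hTM f (by
    have : aM ≫ f = 0 := hz1 _
    exact this)
  obtain ⟨XM, hXM, ⟨eM⟩⟩ := hBM
  obtain ⟨YN, hYN, ⟨eN⟩⟩ := hBN
  have hz2 : hzP BM BN :=
    hzP_of_iso eM eN (hzP_shift (1:ℤ) (fun p => hpair₁ hXM hYN p))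
  obtain ⟨g₂, hg₂⟩ := Triangle.coyoneda_exact₂ _ hTN g₁ (by
    have : g₁ ≫ bN = 0 := hz2 _
    exact this)
  obtain ⟨DN, hDN, ⟨eDN⟩⟩ := hAN
  have hz3 : hzP M AN :=
    hzP_of_iso (Iso.refl M) eDN (fun p => hMl DN hDN p)
  have hbg : bM ≫ g₂ = 0 := hz3 _
  calc f = bM ≫ g₁ := hg₁
    _ = bM ≫ g₂ ≫ aN := by rw [hg₂]; rfl
    _ = (bM ≫ g₂) ≫ aN := by erw [Category.assoc]
    _ = 0 := by rw [hbg]; exact zero_comp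

/-- Part (c): rigidity of the mutated class. -/
lemma part_c (hrigid : homZero 𝒳 (shiftSet 𝒳 (1:ℤ)))
    (hperp : leftPerpShift 𝒟 = shiftRightPerp 𝒟) :
    homZero (muInv 𝒳 𝒟) (shiftSet (muInv 𝒳 𝒟) (1:ℤ)) := by
  rintro M B' ⟨⟨AM, BM, aM, bM, cM, hAM, hBM, hTM⟩, hMl⟩
    ⟨M', ⟨⟨AM', BM', a', b', c', hA', hB', hT'⟩, hM'l⟩, ⟨e'⟩⟩ f
  suffices h : ∀ g : M ⟶ M'⟦(1:ℤ)⟧, g = 0 by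
    have h0 : f ≫ e'.inv = 0 := h _
    calc f = (f ≫ e'.inv) ≫ e'.hom := by simp
      _ = 0 := by rw [h0, zero_comp]
  intro g
  have hz1 : hzP AM (M'⟦(1:ℤ)⟧) := flip₁ hperp hM'l AM hAM
  obtain ⟨g₁, hg₁⟩ := Triangle.yoneda_exact₂ _ hTM g (by
    have : aM ≫ g = 0 := hz1 _
    exact this)
  obtain ⟨XM, hXM, ⟨eM⟩⟩ := hBM
  set g₀ := (shiftFunctor C (1:ℤ)).preimage (eM.hom ≫ g₁) with hg₀
  obtain ⟨X', hX', ⟨eX'⟩⟩ := hB'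
  have hz2 : hzP XM BM' :=
    hzP_of_iso (Iso.refl XM) eX' (fun p => hrigid hXM ⟨X', hX', ⟨Iso.refl _⟩⟩ p)
  obtain ⟨g₃, hg₃⟩ := Triangle.coyoneda_exact₂ _ hT' g₀ (by
    have : g₀ ≫ b' = 0 := hz2 _
    exact this)
  have hpre : bM ≫ eM.inv ≫ g₃⟦(1:ℤ)⟧' = 0 := hMl AM' hA' _
  calc g = bM ≫ g₁ := hg₁
    _ = bM ≫ eM.inv ≫ (eM.hom ≫ g₁) := by erw [Iso.inv_hom_id_assoc]
    _ = bM ≫ eM.inv ≫ g₀⟦(1:ℤ)⟧' := by rw [hg₀, Functor.map_preimage]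
    _ = bM ≫ eM.inv ≫ (g₃ ≫ a')⟦(1:ℤ)⟧' := by rw [hg₃]; rfl
    _ = (bM ≫ eM.inv ≫ g₃⟦(1:ℤ)⟧') ≫ a'⟦(1:ℤ)⟧' := by
        erw [Functor.map_comp]; simp only [Category.assoc]
    _ = 0 := by rw [hpre, zero_comp]

end PartsAC

section PartB

variable {𝒳 𝒴 𝒟 : Set C}

lemma part_b [IsIdempotentComplete C]
    (hX : IsSubcat 𝒳) (hY : IsSubcat 𝒴) (hD : IsSubcat 𝒟)
    (hpair : IsTorsionPair 𝒳 𝒴)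
    (hrigid : homZero 𝒳 (shiftSet 𝒳 (1:ℤ)))
    (hRF : RF 𝒟) (hDX : 𝒟 ⊆ 𝒳) (hXD : 𝒳 ⊆ shiftRightPerp 𝒟) (Z : C) :
    Z ∈ extClass (muInv 𝒳 𝒟) (muInv 𝒴 (shiftSet 𝒟 (1:ℤ))) := by
  obtain ⟨hLA, hRA, hDrig, hperp⟩ := hRF
  -- S1 : right 𝒟-approximation of Z and its cone U
  obtain ⟨Dst, hDst, d, happd⟩ := hRA Z
  obtain ⟨U, e, r, hTU⟩ := Pretriangulated.distinguished_cocone_triangle d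
  -- S2 : Wakamatsu vanishing Hom(𝒟, U) = 0
  have hDU : ∀ D' ∈ 𝒟, hzP D' U := by
    intro D' hD' φ
    have h1 : φ ≫ (Triangle.mk d e r).mor₃ = 0 :=
      hDrig hD' ⟨Dst, hDst, ⟨Iso.refl _⟩⟩ _
    obtain ⟨ψ, hψ⟩ := Triangle.coyoneda_exact₃ _ hTU φ h1
    obtain ⟨ψ', hψ'⟩ := happd D' hD' ψ
    have hde : d ≫ e = 0 := comp_distTriang_mor_zero₁₂ _ hTU
    calc φ = ψ ≫ e := hψ
      _ = (ψ' ≫ d) ≫ e := by rw [hψ']; rfl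
      _ = ψ' ≫ (d ≫ e) := by rw [Category.assoc]
      _ = 0 := by rw [hde, comp_zero]
  -- S3 : torsion decomposition of U⟦-1⟧, re-shifted to a triangle on U
  obtain ⟨X₁, Y₁, a₀, b₀, c₀, hX₁, hY₁, hTdec⟩ := hpair.2 (U⟦(-1:ℤ)⟧)
  set T3r := ((Triangle.mk a₀ b₀ c₀).rotate.rotate.rotate) with hT3rdef
  have hT3r : T3r ∈ distTriang C :=
    rot_of_distTriang _ (rot_of_distTriang _ (rot_of_distTriang _ hTdec))
  set εU := (shiftEquiv C (1:ℤ)).counitIso.app U with hεU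
  set T2x : Triangle C := Triangle.mk (T3r.mor₁ ≫ εU.hom) (εU.inv ≫ T3r.mor₂) T3r.mor₃
    with hT2xdef
  have hT2x : T2x ∈ distTriang C := by
    refine isomorphic_distinguished _ hT3r _ ?_
    refine Triangle.isoMk _ _ (Iso.refl _) εU.symm (Iso.refl _) ?_ ?_ ?_
    · exact (Category.assoc _ _ _).trans ((congrArg (T3r.mor₁ ≫ ·) εU.hom_inv_id).trans ((Category.comp_id _).trans (Category.id_comp _).symm))
    · exact (Category.comp_id _).trans rfl
    · exact ((congrArg (T3r.mor₃ ≫ ·) ((shiftFunctor C (1:ℤ)).map_id _)).trans (Category.comp_id _)).trans (Category.id_comp _).symm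
  -- S4 : left 𝒟-approximation of X₁ and its cone M₀
  obtain ⟨D₀, hD₀, α₁, happα⟩ := hLA X₁
  obtain ⟨M₀, β₁, θ₁, hT1⟩ := Pretriangulated.distinguished_cocone_triangle α₁
  have hM₀l : M₀ ∈ leftPerpShift 𝒟 :=
    cone_approx_lps hDrig hD₀ happα hT1
  -- S5 : the composite m₁ and its cone N
  obtain ⟨N, n₁, s₁, hT3⟩ : ∃ (N : C) (n₁ : U ⟶ N) (s₁ : N ⟶ M₀⟦(1:ℤ)⟧),
      Triangle.mk (θ₁ ≫ T2x.mor₁) n₁ s₁ ∈ distTriang C :=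
    Pretriangulated.distinguished_cocone_triangle (θ₁ ≫ T2x.mor₁)
  -- S6a : Hom(𝒟, N) = 0
  have hDN : ∀ D' ∈ 𝒟, hzP D' N := by
    intro D' hD' φ
    have h1 : φ ≫ (Triangle.mk (θ₁ ≫ T2x.mor₁) n₁ s₁).mor₃ = 0 :=
      flip₁ hperp hM₀l D' hD' _
    obtain ⟨ψ, hψ⟩ := Triangle.coyoneda_exact₃ _ hT3 φ h1
    rw [hψ, hDU D' hD' ψ]; exact zero_comp
  -- S6b : N ∈ ⊥((𝒟[1])[1])
  have hNlps : N ∈ leftPerpShift (shiftSet 𝒟 (1:ℤ)) := flip₂ hperp hDN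
  -- S6c : the map σ : D₀⟦1⟧ ⟶ N
  obtain ⟨σ, hσ1, hσ2⟩ : ∃ σ : (D₀⟦(1:ℤ)⟧) ⟶ N,
      ((Triangle.mk α₁ β₁ θ₁).rotate.rotate.mor₂ ≫ σ =
        T2x.mor₁ ≫ (Triangle.mk (θ₁ ≫ T2x.mor₁) n₁ s₁).mor₂) ∧
      ((Triangle.mk α₁ β₁ θ₁).rotate.rotate.mor₃ ≫ (𝟙 M₀)⟦(1:ℤ)⟧' =
        σ ≫ (Triangle.mk (θ₁ ≫ T2x.mor₁) n₁ s₁).mor₃) :=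
    Pretriangulated.complete_distinguished_triangle_morphism
    ((Triangle.mk α₁ β₁ θ₁).rotate.rotate) (Triangle.mk (θ₁ ≫ T2x.mor₁) n₁ s₁)
    (rot_of_distTriang _ (rot_of_distTriang _ hT1)) hT3 (𝟙 M₀) T2x.mor₁
    (by exact (Category.id_comp _).symm)
  have hσs : σ ≫ s₁ = -(β₁⟦(1:ℤ)⟧') := by
    have h := hσ2; change (-(β₁⟦(1:ℤ)⟧')) ≫ (𝟙 M₀)⟦(1:ℤ)⟧' = σ ≫ s₁ at h
    simp only [CategoryTheory.Functor.map_id, Category.comp_id] at h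
    exact h.symm
  have hσ1' : (-(α₁⟦(1:ℤ)⟧')) ≫ σ = T2x.mor₁ ≫ n₁ := by
    have := hσ1; exact this
  -- S6d : the cone Q of σ
  obtain ⟨Q, g', h', hTQ⟩ := Pretriangulated.distinguished_cocone_triangle σ
  -- S6e : the map κ : Y₁⟦1⟧ ⟶ Q
  obtain ⟨κ, hκ1, hκ2⟩ : ∃ κ : (Y₁⟦(1:ℤ)⟧) ⟶ Q,
      (T2x.mor₂ ≫ κ = n₁ ≫ (Triangle.mk σ g' h').mor₂) ∧
      (T2x.mor₃ ≫ (-(α₁⟦(1:ℤ)⟧'))⟦(1:ℤ)⟧' = κ ≫ (Triangle.mk σ g' h').mor₃) :=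
    Pretriangulated.complete_distinguished_triangle_morphism
    T2x (Triangle.mk σ g' h') hT2x hTQ (-(α₁⟦(1:ℤ)⟧')) n₁ hσ1'.symm
  -- S6f : Hom(𝒳⟦1⟧, Q) = 0
  have hXQ : ∀ A ∈ 𝒳, hzP (A⟦(1:ℤ)⟧) Q := by
    intro A hA φ
    have hAl : A ∈ leftPerpShift 𝒟 := by rw [hperp]; exact hXD hA
    have hφh' : φ ≫ h' = 0 := hzP_shift (1:ℤ) (fun p => hAl D₀ hD₀ p) _
    obtain ⟨ψ, hψ⟩ : ∃ ψ : A⟦(1:ℤ)⟧ ⟶ N, φ = ψ ≫ g' :=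
      Triangle.coyoneda_exact₃ _ hTQ φ hφh'
    set ct := (shiftFunctor C (1:ℤ)).preimage (ψ ≫ s₁) with hct
    have hcts : ct⟦(1:ℤ)⟧' = ψ ≫ s₁ := (shiftFunctor C (1:ℤ)).map_preimage _
    have hctθ : ct ≫ θ₁ = 0 := hrigid hA ⟨X₁, hX₁, ⟨Iso.refl _⟩⟩ _
    obtain ⟨ch, hch⟩ : ∃ ch : A ⟶ D₀, ct = ch ≫ β₁ :=
      Triangle.coyoneda_exact₃ _ hT1 ct hctθ
    have hkill : (ψ + ch⟦(1:ℤ)⟧' ≫ σ) ≫ s₁ = 0 := by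
      rw [Preadditive.add_comp, Category.assoc, hσs, ← hcts, hch, Functor.map_comp]
      simp
    obtain ⟨ξ, hξ⟩ : ∃ ξ : A⟦(1:ℤ)⟧ ⟶ U, ψ + ch⟦(1:ℤ)⟧' ≫ σ = ξ ≫ n₁ :=
      Triangle.coyoneda_exact₃ _ hT3 _ hkill
    have hσg : σ ≫ g' = 0 := comp_distTriang_mor_zero₁₂ _ hTQ
    have hξv : ξ ≫ T2x.mor₂ = 0 :=
      hzP_shift (1:ℤ) (fun p => hpair.1 hA hY₁ p) _
    have hng : n₁ ≫ g' = T2x.mor₂ ≫ κ := by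
      have := hκ1; exact this.symm
    have hψ' : ψ = ξ ≫ n₁ - ch⟦(1:ℤ)⟧' ≫ σ := by
      rw [← hξ]; abel
    calc φ = ψ ≫ g' := hψ
      _ = (ξ ≫ n₁ - ch⟦(1:ℤ)⟧' ≫ σ) ≫ g' := by rw [← hψ']
      _ = ξ ≫ (n₁ ≫ g') - ch⟦(1:ℤ)⟧' ≫ (σ ≫ g') := by
          rw [Preadditive.sub_comp, Category.assoc, Category.assoc]
      _ = (ξ ≫ T2x.mor₂) ≫ κ - 0 := by rw [hng, hσg, comp_zero]; congr 1; exact (Category.assoc _ _ _).symm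
      _ = 0 := by rw [hξv]; erw [zero_comp, sub_zero]
  -- S6g : Q⟦-1⟧ ∈ 𝒴
  have hQY : Q⟦(-1:ℤ)⟧ ∈ 𝒴 := by
    refine mem_right_of_torsion hY hpair (fun A hA => ?_)
    have h1 : hzP (A⟦(1:ℤ)⟧⟦(-1:ℤ)⟧) (Q⟦(-1:ℤ)⟧) := hzP_shift (-1:ℤ) (hXQ A hA)
    exact hzP_of_iso ((shiftEquiv C (1:ℤ)).unitIso.app A).symm (Iso.refl _) h1
  -- S6h : N belongs to the mutated class of 𝒴
  have hNmem : N ∈ muInv 𝒴 (shiftSet 𝒟 (1:ℤ)) := by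
    refine ⟨⟨D₀⟦(1:ℤ)⟧, Q, σ, g', h', ⟨D₀, hD₀, ⟨Iso.refl _⟩⟩,
      ⟨Q⟦(-1:ℤ)⟧, hQY, ⟨(shiftEquiv C (1:ℤ)).counitIso.app Q⟩⟩, hTQ⟩, hNlps⟩
  -- S7 : the final triangle
  obtain ⟨W, gw, hw, hTf'⟩ := Pretriangulated.distinguished_cocone_triangle (e ≫ n₁)
  set Tf := (Triangle.mk (e ≫ n₁) gw hw).invRotate with hTfdef
  have hTf : Tf ∈ distTriang C := inv_rot_of_distTriang _ hTf'
  set TB := Tf.invRotate with hTBdef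
  have hTB : TB ∈ distTriang C := inv_rot_of_distTriang _ hTf
  set TA := (Triangle.mk d e r).invRotate with hTAdef
  have hTA : TA ∈ distTriang C := inv_rot_of_distTriang _ hTU
  -- S8a : the comparison map ω : W⟦-1⟧ ⟶ M₀
  obtain ⟨ω, hω1, hω2⟩ : ∃ ω : (W⟦(-1:ℤ)⟧) ⟶ M₀,
      (Tf.mor₁ ≫ e = ω ≫ (Triangle.mk (θ₁ ≫ T2x.mor₁) n₁ s₁).mor₁) ∧
      (Tf.mor₃ ≫ ω⟦(1:ℤ)⟧' = 𝟙 N ≫ (Triangle.mk (θ₁ ≫ T2x.mor₁) n₁ s₁).mor₃) :=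
    Pretriangulated.complete_distinguished_triangle_morphism₁
    Tf (Triangle.mk (θ₁ ≫ T2x.mor₁) n₁ s₁) hTf hT3 e (𝟙 N) (by
      exact Category.comp_id _)
  have hω2' : Tf.mor₃ ≫ ω⟦(1:ℤ)⟧' = s₁ := by
    rw [hω2]; exact Category.id_comp _
  -- S8b : the comparison map lam : Dst ⟶ W⟦-1⟧
  obtain ⟨lam, hlam1, hlam2⟩ : ∃ lam : Dst ⟶ (W⟦(-1:ℤ)⟧),
      (TA.mor₁ ≫ lam = n₁⟦(-1:ℤ)⟧' ≫ TB.mor₁) ∧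
      (TA.mor₂ ≫ 𝟙 Z = lam ≫ TB.mor₂) :=
    Pretriangulated.complete_distinguished_triangle_morphism₂
    TA TB hTA hTB (n₁⟦(-1:ℤ)⟧') (𝟙 Z) (by
      have hnat := (shiftEquiv C (1:ℤ)).counitIso.inv.naturality n₁
      exact (Category.assoc _ _ _).trans ((congrArg (e ≫ ·) hnat.symm).trans
        ((Category.assoc _ _ _).symm.trans (Category.id_comp _).symm)))
  have hlam2' : lam ≫ TB.mor₂ = d := by
    have := hlam2; dsimp [TA] at this; rw [← this]; exact Category.comp_id _
  -- S8g : W⟦-1⟧ ∈ ⊥(𝒟[1])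
  have hMfl : (W⟦(-1:ℤ)⟧) ∈ leftPerpShift 𝒟 := by
    intro D' hD' φ
    have hχ : TB.mor₁ ≫ φ = 0 := by
      have h0 : lpUp (TB.mor₁ ≫ φ) = 0 :=
        hNlps (D'⟦(1:ℤ)⟧) ⟨D', hD', ⟨Iso.refl _⟩⟩ _
      exact (lpUp_eq_zero_iff _).mp h0
    obtain ⟨χc, hχc⟩ : ∃ χc : Z ⟶ D'⟦(1:ℤ)⟧, φ = TB.mor₂ ≫ χc :=
      Triangle.yoneda_exact₂ _ hTB φ hχ
    have hd : d ≫ χc = 0 := hDrig hDst ⟨D', hD', ⟨Iso.refl _⟩⟩ _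
    obtain ⟨χ₁, hχ₁⟩ : ∃ χ₁ : U ⟶ D'⟦(1:ℤ)⟧, χc = e ≫ χ₁ :=
      Triangle.yoneda_exact₂ _ hTU χc hd
    have hm : (θ₁ ≫ T2x.mor₁) ≫ χ₁ = 0 := hM₀l D' hD' _
    rw [hχc, hχ₁]
    refine (Category.assoc _ _ _).symm.trans ?_
    refine (congrArg (· ≫ χ₁) hω1).trans ?_
    refine (Category.assoc _ _ _).trans ?_
    exact (congrArg (ω ≫ ·) hm).trans comp_zero
  -- the two covering maps into W⟦-1⟧
  set σΛ : D₀ ⟶ (W⟦(-1:ℤ)⟧) :=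
    ((shiftEquiv C (1:ℤ)).unitIso.hom.app D₀) ≫ σ⟦(-1:ℤ)⟧' ≫ TB.mor₁ with hσΛ
  -- ghost covering property
  have hghost : ∀ Yt ∈ 𝒴, ∀ ψ : (W⟦(-1:ℤ)⟧) ⟶ (Yt⟦(1:ℤ)⟧),
      lam ≫ ψ = 0 → σΛ ≫ ψ = 0 → ψ = 0 := by
    intro Yt hYt ψ hl hs
    have h1 : n₁⟦(-1:ℤ)⟧' ≫ (TB.mor₁ ≫ ψ) = 0 := by
      exact (Category.assoc _ _ _).symm.trans ((congrArg (· ≫ ψ) hlam1.symm).trans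
        ((Category.assoc _ _ _).trans ((congrArg (TA.mor₁ ≫ ·) hl).trans comp_zero)))
    have h2 : n₁ ≫ lpUp (TB.mor₁ ≫ ψ) = 0 := by
      rw [← lpUp_comp_left, h1]; exact (lpUp_eq_zero_iff _).mpr rfl
    obtain ⟨ρp, hρp⟩ : ∃ ρp : (M₀⟦(1:ℤ)⟧) ⟶ (Yt⟦(1:ℤ)⟧⟦(1:ℤ)⟧),
        lpUp (TB.mor₁ ≫ ψ) = s₁ ≫ ρp :=
      Triangle.yoneda_exact₃ _ hT3 _ h2
    have h3 : σ⟦(-1:ℤ)⟧' ≫ (TB.mor₁ ≫ ψ) = 0 := by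
      have h4 : ((shiftEquiv C (1:ℤ)).unitIso.hom.app D₀) ≫
          σ⟦(-1:ℤ)⟧' ≫ (TB.mor₁ ≫ ψ) = 0 := by
        rw [hσΛ] at hs
        rw [← hs]; exact ((Category.assoc _ _ _).trans (congrArg (_ ≫ ·) (Category.assoc _ _ _))).symm
      have h5 := congrArg (fun t => ((shiftEquiv C (1:ℤ)).unitIso.inv.app D₀) ≫ t) h4
      exact (Iso.inv_hom_id_app_assoc (shiftEquiv C (1:ℤ)).unitIso D₀ _).symm.trans (h5.trans comp_zero)
    have h5 : σ ≫ lpUp (TB.mor₁ ≫ ψ) = 0 := by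
      rw [← lpUp_comp_left, h3]; exact (lpUp_eq_zero_iff _).mpr rfl
    have h6 : β₁⟦(1:ℤ)⟧' ≫ ρp = 0 := by
      have h7 := h5
      replace h7 : (σ ≫ s₁) ≫ ρp = 0 :=
        (Category.assoc _ _ _).trans ((congrArg (σ ≫ ·) hρp).symm.trans h7)
      rw [hσs] at h7
      simpa using h7
    have h7 : β₁ ≫ (shiftFunctor C (1:ℤ)).preimage ρp = 0 := by
      apply (shiftFunctor C (1:ℤ)).map_injective
      rw [Functor.map_comp, Functor.map_preimage, Functor.map_zero]
      exact h6
    obtain ⟨ρ₁, hρ₁⟩ : ∃ ρ₁ : (X₁⟦(1:ℤ)⟧) ⟶ (Yt⟦(1:ℤ)⟧),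
        (shiftFunctor C (1:ℤ)).preimage ρp = θ₁ ≫ ρ₁ :=
      Triangle.yoneda_exact₃ _ hT1 _ h7
    have hρ₁0 : ρ₁ = 0 := hzP_shift (1:ℤ) (fun p => hpair.1 hX₁ hYt p) _
    have hρp0 : ρp = 0 := by
      have h8 : (shiftFunctor C (1:ℤ)).preimage ρp = 0 := by
        rw [hρ₁, hρ₁0, comp_zero]
      rw [← (shiftFunctor C (1:ℤ)).map_preimage ρp, h8, Functor.map_zero]
    have hχ0 : TB.mor₁ ≫ ψ = 0 := by
      exact (lpUp_eq_zero_iff (TB.mor₁ ≫ ψ)).mp (hρp.trans (by rw [hρp0]; exact comp_zero))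
    obtain ⟨ξ, hξ⟩ : ∃ ξ : Z ⟶ (Yt⟦(1:ℤ)⟧), ψ = TB.mor₂ ≫ ξ :=
      Triangle.yoneda_exact₂ _ hTB ψ hχ0
    have hdξ : d ≫ ξ = 0 := by
      rw [← hlam2']
      exact (Category.assoc _ _ _).trans ((congrArg (lam ≫ ·) hξ.symm).trans hl)
    obtain ⟨ξu, hξu⟩ : ∃ ξu : U ⟶ (Yt⟦(1:ℤ)⟧), ξ = e ≫ ξu :=
      Triangle.yoneda_exact₂ _ hTU ξ hdξ
    have hψω : ψ = ω ≫ ((θ₁ ≫ T2x.mor₁) ≫ ξu) := by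
      rw [hξ, hξu]
      refine (Category.assoc _ _ _).symm.trans ?_
      refine (congrArg (· ≫ ξu) hω1).trans ?_
      exact Category.assoc _ _ _
    have hTBω : TB.mor₁ ≫ ω =
        -(s₁⟦(-1:ℤ)⟧' ≫ ((shiftEquiv C (1:ℤ)).unitIso.inv.app M₀)) := by
      have hnat := (shiftEquiv C (1:ℤ)).unitIso.inv.naturality
        (show Tf.obj₁ ⟶ M₀ from ω)
      dsimp at hnat
      dsimp [TB]
      erw [Preadditive.neg_comp, Category.assoc, ← hnat, ← Category.assoc,
        ← Functor.map_comp, hω2']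
      rfl
    have hσΛψ : σΛ ≫ ψ = β₁ ≫ ((θ₁ ≫ T2x.mor₁) ≫ ξu) := by
      have hnatβ' : β₁ ≫ ((shiftEquiv C (1:ℤ)).unitIso.hom.app M₀) =
          ((shiftEquiv C (1:ℤ)).unitIso.hom.app D₀) ≫ ((β₁⟦(1:ℤ)⟧')⟦(-1:ℤ)⟧') :=
        (shiftEquiv C (1:ℤ)).unitIso.hom.naturality β₁
      have hkey : σ⟦(-1:ℤ)⟧' ≫ (TB.mor₁ ≫ ω) =
          ((β₁⟦(1:ℤ)⟧')⟦(-1:ℤ)⟧') ≫ ((shiftEquiv C (1:ℤ)).unitIso.inv.app M₀) := by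
        erw [hTBω, Preadditive.comp_neg, ← Category.assoc, ← Functor.map_comp, hσs]
        simp
      have hkey2 : ((shiftEquiv C (1:ℤ)).unitIso.hom.app D₀) ≫
          σ⟦(-1:ℤ)⟧' ≫ (TB.mor₁ ≫ ω) = β₁ := by
        erw [hkey, ← Category.assoc, ← hnatβ', Category.assoc]
        simp
      calc σΛ ≫ ψ = (((shiftEquiv C (1:ℤ)).unitIso.hom.app D₀) ≫
            σ⟦(-1:ℤ)⟧' ≫ (TB.mor₁ ≫ ω)) ≫ ((θ₁ ≫ T2x.mor₁) ≫ ξu) := by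
            rw [hσΛ, hψω]; simp only [Category.assoc]
            exact congrArg (_ ≫ ·) ((Category.assoc _ _ _).trans
              ((congrArg (_ ≫ ·) (Category.assoc _ _ _)).symm.trans (Category.assoc _ _ _).symm))
        _ = β₁ ≫ ((θ₁ ≫ T2x.mor₁) ≫ ξu) := by rw [hkey2]
    have hβρ : β₁ ≫ ((θ₁ ≫ T2x.mor₁) ≫ ξu) = 0 := by rw [← hσΛψ]; exact hs
    obtain ⟨ρ₂, hρ₂⟩ : ∃ ρ₂ : (X₁⟦(1:ℤ)⟧) ⟶ (Yt⟦(1:ℤ)⟧),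
        (θ₁ ≫ T2x.mor₁) ≫ ξu = θ₁ ≫ ρ₂ :=
      Triangle.yoneda_exact₃ _ hT1 _ hβρ
    have hρ₂0 : ρ₂ = 0 := hzP_shift (1:ℤ) (fun p => hpair.1 hX₁ hYt p) _
    rw [hψω, hρ₂, hρ₂0, comp_zero, comp_zero]
  -- the triangle exhibiting W⟦-1⟧ in 𝒟 * 𝒳⟦1⟧
  set Lam : (Dst ⊞ D₀) ⟶ (W⟦(-1:ℤ)⟧) := biprod.desc lam σΛ with hLam
  obtain ⟨R, πR, gR, hTR⟩ := Pretriangulated.distinguished_cocone_triangle Lam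
  have hcz : Lam ≫ πR = 0 := comp_distTriang_mor_zero₁₂ _ hTR
  have hRY : ∀ Yt ∈ 𝒴, hzP R (Yt⟦(1:ℤ)⟧) := by
    intro Yt hYt φ
    have hπφ : πR ≫ φ = 0 := by
      apply hghost Yt hYt
      · calc lam ≫ πR ≫ φ = (biprod.inl ≫ Lam) ≫ πR ≫ φ := by rw [hLam]; simp
          _ = biprod.inl ≫ (Lam ≫ πR) ≫ φ := by simp only [Category.assoc]
          _ = 0 := by rw [hcz]; simp
      · calc σΛ ≫ πR ≫ φ = (biprod.inr ≫ Lam) ≫ πR ≫ φ := by rw [hLam]; simp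
          _ = biprod.inr ≫ (Lam ≫ πR) ≫ φ := by simp only [Category.assoc]
          _ = 0 := by rw [hcz]; simp
    obtain ⟨φ₁, hφ₁⟩ : ∃ φ₁ : ((Dst ⊞ D₀)⟦(1:ℤ)⟧) ⟶ (Yt⟦(1:ℤ)⟧), φ = gR ≫ φ₁ :=
      Triangle.yoneda_exact₃ _ hTR φ hπφ
    have hφ₀ : (shiftFunctor C (1:ℤ)).preimage φ₁ = 0 := by
      apply biprod.hom_ext'
      · rw [comp_zero]; exact hpair.1 (hDX hDst) hYt _
      · rw [comp_zero]; exact hpair.1 (hDX hD₀) hYt _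
    rw [hφ₁, ← (shiftFunctor C (1:ℤ)).map_preimage φ₁, hφ₀, Functor.map_zero,
      comp_zero]
  have hRX : R⟦(-1:ℤ)⟧ ∈ 𝒳 := by
    refine mem_left_of_torsion hX hpair (fun B hB f => ?_)
    have h0 : lpUp f = 0 := hRY B hB _
    exact (lpUp_eq_zero_iff _).mp h0
  have hMfmem : (W⟦(-1:ℤ)⟧) ∈ muInv 𝒳 𝒟 := by
    refine ⟨⟨Dst ⊞ D₀, R, Lam, πR, gR, hD.biprod_mem hDst hD₀,
      ⟨R⟦(-1:ℤ)⟧, hRX, ⟨(shiftEquiv C (1:ℤ)).counitIso.app R⟩⟩, hTR⟩, hMfl⟩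
  exact ⟨W⟦(-1:ℤ)⟧, N, Tf.mor₁, Tf.mor₂, Tf.mor₃, hMfmem, hNmem, hTf⟩

end PartB


end AuxStmt12

/-- the `𝒟`-mutation of a rigid torsion pair is again a rigid
torsion pair. -/
theorem stmt12 (k : Type*) [Field k] [Linear k C]
    [∀ A B : C, Module.Finite k (A ⟶ B)] [IsIdempotentComplete C]
    (𝒳 𝒴 𝒟 : Set C) (hX : IsSubcat 𝒳) (hY : IsSubcat 𝒴) (hD : IsSubcat 𝒟)
    (hpair : IsTorsionPair 𝒳 𝒴)
    (hrigid : homZero 𝒳 (shiftSet 𝒳 (1:ℤ)))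
    (hRF : RF 𝒟)
    (hDX : 𝒟 ⊆ 𝒳) (hXD : 𝒳 ⊆ shiftRightPerp 𝒟) :
    IsTorsionPair (muInv 𝒳 𝒟) (muInv 𝒴 (shiftSet 𝒟 (1:ℤ))) ∧
    homZero (muInv 𝒳 𝒟) (shiftSet (muInv 𝒳 𝒟) (1:ℤ)) := by
  exact ⟨⟨part_a hpair.1 hRF.2.2.2, fun Z => part_b hX hY hD hpair hrigid hRF hDX hXD Z⟩,
    part_c hrigid hRF.2.2.2⟩
end
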